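/- arXiv:1209.0287 — 3 statements merged into one kernel-verified Lean document; each statement's English description precedes it below -/
import Mathlib

section
/- The move H7 is derivable from the homotopy moves: for all words x, y, z, t and distinct letters A, B, C not occurring in them, the word xAByACzCBt is homotopic to xBAyCAzBCt. -/
set_option maxHeartbeats 1000000

/-- A Gauss word: every letter that occurs, occurs exactly twice. -/
def IsGauss (w : List ℕ) : Prop := ∀ a ∈ w, w.count a = 2

/-- Rank of a word: the number of distinct letters occurring in it. -/
def rank (w : List ℕ) : ℕ := w.dedup.length

/-- Two words are isomorphic if one is obtained from the other by an
injective (hence bijective onto its image) relabeling of letters. -/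
def Isomorphic (w₁ w₂ : List ℕ) : Prop :=
  ∃ f : ℕ → ℕ, Function.Injective f ∧ w₂ = w₁.map f

/-- One step: an isomorphism or a homotopy move H1, H2, H3. -/
inductive Move : List ℕ → List ℕ → Prop
  | iso {w₁ w₂ : List ℕ} : Isomorphic w₁ w₂ → Move w₁ w₂
  | h1 (x y : List ℕ) (A : ℕ) (hA : A ∉ x ++ y) :
      Move (x ++ [A, A] ++ y) (x ++ y)
  | h2 (x y z : List ℕ) (A B : ℕ) (hAB : A ≠ B)
      (hA : A ∉ x ++ y ++ z) (hB : B ∉ x ++ y ++ z) :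
      Move (x ++ [A, B] ++ y ++ [B, A] ++ z) (x ++ y ++ z)
  | h3 (x y z t : List ℕ) (A B C : ℕ)
      (hAB : A ≠ B) (hAC : A ≠ C) (hBC : B ≠ C)
      (hA : A ∉ x ++ y ++ z ++ t) (hB : B ∉ x ++ y ++ z ++ t)
      (hC : C ∉ x ++ y ++ z ++ t) :
      Move (x ++ [A, B] ++ y ++ [A, C] ++ z ++ [B, C] ++ t)
           (x ++ [B, A] ++ y ++ [C, A] ++ z ++ [C, B] ++ t)

/-- Homotopy: the equivalence relation generated by isomorphisms and H1–H3. -/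
def Homotopic : List ℕ → List ℕ → Prop := Relation.EqvGen Move

private lemma move_congr {a b a' b' : List ℕ} (h : Move a b) (ha : a = a') (hb : b = b') :
    Move a' b' := ha ▸ hb ▸ h

private lemma foldr_max_le (l : List ℕ) : ∀ a ∈ l, a ≤ l.foldr max 0 := by
  induction l with
  | nil => simp
  | cons b l ih =>
    intro a ha
    rcases List.mem_cons.mp ha with h | h
    · subst h; exact le_max_left _ _
    · exact le_trans (ih a h) (le_max_right _ _)

private lemma map_fix {f : ℕ → ℕ} {l : List ℕ} (h : ∀ a ∈ l, f a = a) : l.map f = l := by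
  induction l with
  | nil => rfl
  | cons b l ih =>
    simp only [List.map_cons, h b List.mem_cons_self,
      ih fun a ha => h a (List.mem_cons_of_mem _ ha)]

/-- H7 is derivable: xAByACzCBt is homotopic to xBAyCAzBCt. -/
theorem h7_derivable (x y z t : List ℕ) (A B C : ℕ)
    (hAB : A ≠ B) (hAC : A ≠ C) (hBC : B ≠ C)
    (hA : A ∉ x ++ y ++ z ++ t) (hB : B ∉ x ++ y ++ z ++ t)
    (hC : C ∉ x ++ y ++ z ++ t) :
    Homotopic (x ++ [A, B] ++ y ++ [A, C] ++ z ++ [C, B] ++ t)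
              (x ++ [B, A] ++ y ++ [C, A] ++ z ++ [B, C] ++ t) := by
  classical
  simp only [List.mem_append, not_or] at hA hB hC
  obtain ⟨⟨⟨hAx, hAy⟩, hAz⟩, hAt⟩ := hA
  obtain ⟨⟨⟨hBx, hBy⟩, hBz⟩, hBt⟩ := hB
  obtain ⟨⟨⟨hCx, hCy⟩, hCz⟩, hCt⟩ := hC
  obtain ⟨K, hK⟩ : ∃ K, ∀ a ∈ (x ++ y ++ z ++ t) ++ [A, B, C], a ≤ K :=
    ⟨_, foldr_max_le _⟩
  have hAK : A ≤ K := hK A (by simp)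
  have hBK : B ≤ K := hK B (by simp)
  have hCK : C ≤ K := hK C (by simp)
  obtain ⟨P, Q, R, S, hPdef, hQdef, hRdef, hSdef⟩ :
      ∃ P Q R S : ℕ, P = K + 1 ∧ Q = K + 2 ∧ R = K + 3 ∧ S = K + 4 :=
    ⟨_, _, _, _, rfl, rfl, rfl, rfl⟩
  have fresh : ∀ n, K < n → n ∉ x ∧ n ∉ y ∧ n ∉ z ∧ n ∉ t := by
    intro n hn
    refine ⟨fun h => ?_, fun h => ?_, fun h => ?_, fun h => ?_⟩ <;>
      · have := hK n (by simp [h])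
        omega
  obtain ⟨hPx, hPy, hPz, hPt⟩ := fresh P (by omega)
  obtain ⟨hQx, hQy, hQz, hQt⟩ := fresh Q (by omega)
  obtain ⟨hRx, hRy, hRz, hRt⟩ := fresh R (by omega)
  obtain ⟨hSx, hSy, hSz, hSt⟩ := fresh S (by omega)
  have hPA : P ≠ A := by omega
  have hPB : P ≠ B := by omega
  have hPC : P ≠ C := by omega
  have hQA : Q ≠ A := by omega
  have hQB : Q ≠ B := by omega
  have hQC : Q ≠ C := by omega
  have hRA : R ≠ A := by omega
  have hRB : R ≠ B := by omega
  have hRC : R ≠ C := by omega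
  have hSA : S ≠ A := by omega
  have hSB : S ≠ B := by omega
  have hSC : S ≠ C := by omega
  have hAP : A ≠ P := hPA.symm
  have hBP : B ≠ P := hPB.symm
  have hCP : C ≠ P := hPC.symm
  have hAQ : A ≠ Q := hQA.symm
  have hBQ : B ≠ Q := hQB.symm
  have hCQ : C ≠ Q := hQC.symm
  have hAR : A ≠ R := hRA.symm
  have hBR : B ≠ R := hRB.symm
  have hCR : C ≠ R := hRC.symm
  have hAS : A ≠ S := hSA.symm
  have hBS : B ≠ S := hSB.symm
  have hCS : C ≠ S := hSC.symm
  have hPQ : P ≠ Q := by omega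
  have hPR : P ≠ R := by omega
  have hPS : P ≠ S := by omega
  have hQP : Q ≠ P := by omega
  have hQR : Q ≠ R := by omega
  have hQS : Q ≠ S := by omega
  have hRP : R ≠ P := by omega
  have hRQ : R ≠ Q := by omega
  have hRS : R ≠ S := by omega
  have hSP : S ≠ P := by omega
  have hSQ : S ≠ Q := by omega
  have hSR : S ≠ R := by omega
  have hBA : B ≠ A := hAB.symm
  have hCA : C ≠ A := hAC.symm
  have hCB : C ≠ B := hBC.symm
  -- The six words
  -- W0 = x A B y A C z C B t  (source)
  -- W1 = x A B y P Q A C z C B Q P t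
  -- W2 = x R S A B y P Q A C z C B Q S R P t
  -- W3 = x R A S B y P A Q C z C B S Q R P t
  -- W4 = x R A y P A Q C z C Q R P t
  -- W5 = x R A y P A z R P t
  -- Goal = x B A y C A z B C t
  have m1 : Move
      (x ++ [A, B] ++ y ++ [P, Q] ++ [A, C] ++ z ++ [C, B] ++ [Q, P] ++ t)
      (x ++ [A, B] ++ y ++ [A, C] ++ z ++ [C, B] ++ t) := by
    refine move_congr
      (Move.h2 (x ++ [A, B] ++ y) ([A, C] ++ z ++ [C, B]) t P Q hPQ ?_ ?_)
      (by simp) (by simp) <;>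
    · simp only [List.mem_append, List.mem_cons, List.not_mem_nil, or_false]
      tauto
  have m2 : Move
      (x ++ [R, S] ++ [A, B] ++ y ++ [P, Q] ++ [A, C] ++ z ++ [C, B] ++ [Q] ++ [S, R] ++ [P] ++ t)
      (x ++ [A, B] ++ y ++ [P, Q] ++ [A, C] ++ z ++ [C, B] ++ [Q, P] ++ t) := by
    refine move_congr
      (Move.h2 x ([A, B] ++ y ++ [P, Q] ++ [A, C] ++ z ++ [C, B] ++ [Q]) ([P] ++ t) R S hRS ?_ ?_)
      (by simp) (by simp) <;>
    · simp only [List.mem_append, List.mem_cons, List.not_mem_nil, or_false]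
      tauto
  have m3 : Move
      (x ++ [R] ++ [A, S] ++ [B] ++ y ++ [P] ++ [A, Q] ++ [C] ++ z ++ [C, B] ++ [S, Q] ++ [R, P] ++ t)
      (x ++ [R, S] ++ [A, B] ++ y ++ [P, Q] ++ [A, C] ++ z ++ [C, B] ++ [Q] ++ [S, R] ++ [P] ++ t) := by
    refine move_congr
      (Move.h3 (x ++ [R]) ([B] ++ y ++ [P]) ([C] ++ z ++ [C, B]) ([R, P] ++ t)
        A S Q hAS hAQ hSQ ?_ ?_ ?_)
      (by simp) (by simp) <;>
    · simp only [List.mem_append, List.mem_cons, List.not_mem_nil, or_false]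
      tauto
  have m4 : Move
      (x ++ [R] ++ [A, S] ++ [B] ++ y ++ [P] ++ [A, Q] ++ [C] ++ z ++ [C, B] ++ [S, Q] ++ [R, P] ++ t)
      (x ++ [R, A] ++ y ++ [P, A] ++ [Q, C] ++ z ++ [C, Q] ++ [R, P] ++ t) := by
    refine move_congr
      (Move.h2 (x ++ [R, A]) (y ++ [P] ++ [A, Q] ++ [C] ++ z ++ [C]) ([Q] ++ [R, P] ++ t)
        S B hSB ?_ ?_)
      (by simp) (by simp) <;>
    · simp only [List.mem_append, List.mem_cons, List.not_mem_nil, or_false]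
      tauto
  have m5 : Move
      (x ++ [R, A] ++ y ++ [P, A] ++ [Q, C] ++ z ++ [C, Q] ++ [R, P] ++ t)
      (x ++ [R, A] ++ y ++ [P, A] ++ z ++ [R, P] ++ t) := by
    refine move_congr
      (Move.h2 (x ++ [R, A] ++ y ++ [P, A]) z ([R, P] ++ t) Q C hQC ?_ ?_)
      (by simp) (by simp) <;>
    · simp only [List.mem_append, List.mem_cons, List.not_mem_nil, or_false]
      tauto
  -- final isomorphism: R ↦ B, B ↦ R, P ↦ C, C ↦ P, identity elsewhere
  obtain ⟨f, hfdef⟩ : ∃ f : ℕ → ℕ, f = fun n => Equiv.swap P C (Equiv.swap R B n) := ⟨_, rfl⟩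
  have finj : Function.Injective f := by
    rw [hfdef]; exact (Equiv.swap P C).injective.comp (Equiv.swap R B).injective
  have fR : f R = B := by
    rw [hfdef]; show Equiv.swap P C (Equiv.swap R B R) = B
    rw [Equiv.swap_apply_left, Equiv.swap_apply_of_ne_of_ne hBP hBC]
  have fP : f P = C := by
    rw [hfdef]; show Equiv.swap P C (Equiv.swap R B P) = C
    rw [Equiv.swap_apply_of_ne_of_ne hPR hPB, Equiv.swap_apply_left]
  have fA : f A = A := by
    rw [hfdef]; show Equiv.swap P C (Equiv.swap R B A) = A
    rw [Equiv.swap_apply_of_ne_of_ne hAR hAB, Equiv.swap_apply_of_ne_of_ne hAP hAC]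
  have ffix : ∀ (l : List ℕ), R ∉ l → B ∉ l → P ∉ l → C ∉ l → l.map f = l := by
    intro l h1 h2 h3 h4
    refine map_fix fun a ha => ?_
    have e1 : a ≠ R := fun e => h1 (e ▸ ha)
    have e2 : a ≠ B := fun e => h2 (e ▸ ha)
    have e3 : a ≠ P := fun e => h3 (e ▸ ha)
    have e4 : a ≠ C := fun e => h4 (e ▸ ha)
    rw [hfdef]; show Equiv.swap P C (Equiv.swap R B a) = a
    rw [Equiv.swap_apply_of_ne_of_ne e1 e2, Equiv.swap_apply_of_ne_of_ne e3 e4]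
  have m6 : Move
      (x ++ [R, A] ++ y ++ [P, A] ++ z ++ [R, P] ++ t)
      (x ++ [B, A] ++ y ++ [C, A] ++ z ++ [B, C] ++ t) := by
    refine Move.iso ⟨f, finj, ?_⟩
    simp only [List.map_append, List.map_cons, List.map_nil, fR, fP, fA,
      ffix x hRx hBx hPx hCx, ffix y hRy hBy hPy hCy,
      ffix z hRz hBz hPz hCz, ffix t hRt hBt hPt hCt]
  exact Relation.EqvGen.trans _ _ _
    (Relation.EqvGen.symm _ _ (Relation.EqvGen.rel _ _ m1))
    (Relation.EqvGen.trans _ _ _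
      (Relation.EqvGen.symm _ _ (Relation.EqvGen.rel _ _ m2))
      (Relation.EqvGen.trans _ _ _
        (Relation.EqvGen.symm _ _ (Relation.EqvGen.rel _ _ m3))
        (Relation.EqvGen.trans _ _ _ (Relation.EqvGen.rel _ _ m4)
          (Relation.EqvGen.trans _ _ _ (Relation.EqvGen.rel _ _ m5)
            (Relation.EqvGen.rel _ _ m6)))))
end

section
/- Every element of the group H_n is annihilated by 2^{n−1}; consequently H_n is a finite abelian 2-group isomorphic to a direct sum of cyclic groups of 2-power order. -/
open FreeAbelianGroup in
/-- Relators defining the truncated Polyak group `H n`: kill non-Gauss words,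
the empty word and words of rank `> n` (G4), identify isomorphic words,
and impose G1, G2 and the eight-term relation G3. -/
def relators (n : ℕ) : Set (FreeAbelianGroup (List ℕ)) :=
  {r | (∃ w : List ℕ, ¬ IsGauss w ∧ r = of w) ∨
       (r = of ([] : List ℕ)) ∨
       -- G4: words of rank greater than n are 0
       (∃ w : List ℕ, n < rank w ∧ r = of w) ∨
       -- identification of isomorphic words
       (∃ w w' : List ℕ, Isomorphic w w' ∧ r = of w - of w') ∨
       -- G1: xAAy = 0
       (∃ (x y : List ℕ) (A : ℕ), IsGauss (x ++ [A, A] ++ y) ∧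
          r = of (x ++ [A, A] ++ y)) ∨
       -- G2: xAByBAz + 2·xAyAz = 0
       (∃ (x y z : List ℕ) (A B : ℕ), A ≠ B ∧
          IsGauss (x ++ [A, B] ++ y ++ [B, A] ++ z) ∧
          r = of (x ++ [A, B] ++ y ++ [B, A] ++ z) +
              2 • of (x ++ [A] ++ y ++ [A] ++ z)) ∨
       -- G3: eight-term relation
       (∃ (x y z t : List ℕ) (A B C : ℕ), A ≠ B ∧ A ≠ C ∧ B ≠ C ∧
          IsGauss (x ++ [A, B] ++ y ++ [A, C] ++ z ++ [B, C] ++ t) ∧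
          r = (of (x ++ [A, B] ++ y ++ [A, C] ++ z ++ [B, C] ++ t) +
               of (x ++ [A, B] ++ y ++ [A] ++ z ++ [B] ++ t) +
               of (x ++ [A] ++ y ++ [A, C] ++ z ++ [C] ++ t) +
               of (x ++ [B] ++ y ++ [C] ++ z ++ [B, C] ++ t)) -
              (of (x ++ [B, A] ++ y ++ [C, A] ++ z ++ [C, B] ++ t) +
               of (x ++ [B, A] ++ y ++ [A] ++ z ++ [B] ++ t) +
               of (x ++ [A] ++ y ++ [C, A] ++ z ++ [C] ++ t) +
               of (x ++ [B] ++ y ++ [C] ++ z ++ [C, B] ++ t)))}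

/-- The truncated Polyak group `H n`. -/
def H (n : ℕ) : Type :=
  FreeAbelianGroup (List ℕ) ⧸ AddSubgroup.closure (relators n)

instance (n : ℕ) : AddCommGroup (H n) :=
  QuotientAddGroup.Quotient.addCommGroup _

/-- The class of a Gauss word in `H n`. -/
def cls (n : ℕ) (w : List ℕ) : H n :=
  QuotientAddGroup.mk (FreeAbelianGroup.of w)

/-! ### Auxiliary machinery -/

open FreeAbelianGroup

/-- The quotient map as an additive homomorphism. -/
def clsHom (n : ℕ) : FreeAbelianGroup (List ℕ) →+ H n :=
  QuotientAddGroup.mk' _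

lemma clsHom_of (n : ℕ) (w : List ℕ) : clsHom n (of w) = cls n w := rfl

lemma clsHom_rel {n : ℕ} {r : FreeAbelianGroup (List ℕ)} (h : r ∈ relators n) :
    clsHom n r = 0 :=
  (QuotientAddGroup.eq_zero_iff r).mpr (AddSubgroup.subset_closure h)

lemma cls_of_notGauss {n : ℕ} {w : List ℕ} (h : ¬ IsGauss w) : cls n w = 0 :=
  clsHom_rel (Or.inl ⟨w, h, rfl⟩)

lemma cls_nil {n : ℕ} : cls n ([] : List ℕ) = 0 :=
  clsHom_rel (Or.inr (Or.inl rfl))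

lemma cls_of_rank_gt {n : ℕ} {w : List ℕ} (h : n < rank w) : cls n w = 0 :=
  clsHom_rel (Or.inr (Or.inr (Or.inl ⟨w, h, rfl⟩)))

lemma cls_iso {n : ℕ} {w w' : List ℕ} (h : Isomorphic w w') : cls n w = cls n w' := by
  have h0 : clsHom n (of w - of w') = 0 :=
    clsHom_rel (Or.inr (Or.inr (Or.inr (Or.inl ⟨w, w', h, rfl⟩))))
  rw [map_sub, sub_eq_zero] at h0
  exact h0

lemma cls_G1 {n : ℕ} {x y : List ℕ} {A : ℕ} (h : IsGauss (x ++ [A, A] ++ y)) :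
    cls n (x ++ [A, A] ++ y) = 0 :=
  clsHom_rel (Or.inr (Or.inr (Or.inr (Or.inr (Or.inl ⟨x, y, A, h, rfl⟩)))))

lemma cls_G2 {n : ℕ} {x y z : List ℕ} {A B : ℕ} (hAB : A ≠ B)
    (h : IsGauss (x ++ [A, B] ++ y ++ [B, A] ++ z)) :
    cls n (x ++ [A, B] ++ y ++ [B, A] ++ z) + 2 • cls n (x ++ [A] ++ y ++ [A] ++ z) = 0 := by
  have h0 : clsHom n (of (x ++ [A, B] ++ y ++ [B, A] ++ z) +
      2 • of (x ++ [A] ++ y ++ [A] ++ z)) = 0 :=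
    clsHom_rel (Or.inr (Or.inr (Or.inr (Or.inr (Or.inr (Or.inl
      ⟨x, y, z, A, B, hAB, h, rfl⟩))))))
  rw [map_add, map_nsmul] at h0
  exact h0

lemma rank_eq_card_toFinset (w : List ℕ) : rank w = w.toFinset.card :=
  (List.card_toFinset w).symm

lemma gauss_length {w : List ℕ} (hw : IsGauss w) : w.length = 2 * rank w := by
  classical
  rw [← List.sum_toFinset_count_eq_length, rank_eq_card_toFinset]
  rw [Finset.sum_congr rfl (fun a ha => hw a (List.mem_toFinset.mp ha))]
  simp [Finset.sum_const, mul_comm]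

/-- The key doubling step coming from relation G2. -/
lemma exists_double (n : ℕ) {w : List ℕ} (hw : IsGauss w) (hne : w ≠ []) :
    ∃ w' : List ℕ, IsGauss w' ∧ rank w' = rank w + 1 ∧
      2 • cls n w = - cls n w' := by
  classical
  obtain ⟨a, t, rfl⟩ : ∃ a t, w = a :: t := by
    cases w with
    | nil => exact absurd rfl hne
    | cons a t => exact ⟨a, t, rfl⟩
  have hat : (a :: t).count a = 2 := hw a List.mem_cons_self
  have hmem : a ∈ t := by
    by_contra h
    rw [List.count_cons_self, List.count_eq_zero_of_not_mem h] at hat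
    omega
  obtain ⟨y, z, rfl⟩ := List.append_of_mem hmem
  set w : List ℕ := a :: (y ++ a :: z) with hwdef
  -- fresh letter B
  set B : ℕ := w.sum + 1 with hBdef
  have hBnotmem : B ∉ w := by
    intro hB
    have := List.single_le_sum (fun x _ => Nat.zero_le x) B hB
    omega
  have hBa : B ≠ a := fun h => hBnotmem (h ▸ (List.mem_cons_self (a := a) (l := y ++ a :: z)))
  have hBy : B ∉ y := fun h => hBnotmem (by simp [hwdef, h])
  have hBz : B ∉ z := fun h => hBnotmem (by simp [hwdef, h])
  set w' : List ℕ := [] ++ [a, B] ++ y ++ [B, a] ++ z with hw'def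
  have hcount : ∀ c, w'.count c = w.count c + List.count c [B, B] := by
    intro c
    simp only [hw'def, hwdef, List.count_append, List.count_cons, List.count_nil,
      List.nil_append, List.cons_append]
    by_cases hca : c = a <;> by_cases hcB : c = B <;>
      simp [hca, hcB, beq_iff_eq] <;> omega
  have hw'gauss : IsGauss w' := by
    intro c hc
    have hmem' : c ∈ w ∨ c = B := by
      simp only [hw'def, hwdef, List.mem_append, List.mem_cons, List.mem_singleton,
        List.not_mem_nil] at hc ⊢
      tauto
    rcases hmem' with hcw | rfl
    · have hcB : c ≠ B := fun h => hBnotmem (h ▸ hcw)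
      rw [hcount c, hw c hcw]
      simp [List.count_cons, hcB, Ne.symm hcB]
    · rw [hcount B, List.count_eq_zero_of_not_mem hBnotmem]
      simp
  have htf : w'.toFinset = insert B w.toFinset := by
    ext c
    simp only [hw'def, hwdef, List.toFinset_append, Finset.mem_union, List.mem_toFinset,
      Finset.mem_insert, List.mem_cons, List.mem_singleton, List.mem_append,
      List.toFinset_cons, Finset.mem_insert, List.mem_toFinset, List.toFinset_nil,
      Finset.notMem_empty]
    tauto
  have hrank : rank w' = rank w + 1 := by
    rw [rank_eq_card_toFinset, rank_eq_card_toFinset, htf,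
      Finset.card_insert_of_notMem (by simpa using hBnotmem)]
  refine ⟨w', hw'gauss, hrank, ?_⟩
  have hrel := cls_G2 (n := n) (x := []) (y := y) (z := z) (A := a) (B := B)
    (fun h => hBa h.symm) (by simpa [hw'def] using hw'gauss)
  have hsmall : ([] ++ [a] ++ y ++ [a] ++ z : List ℕ) = w := by
    simp [hwdef]
  rw [hsmall] at hrel
  have : cls n w' + 2 • cls n w = 0 := by simpa [hw'def] using hrel
  linear_combination (norm := abel) this

lemma pow_smul_cls (n : ℕ) : ∀ (k : ℕ) (w : List ℕ), IsGauss w → w ≠ [] →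
    n < rank w + k → 2 ^ k • cls n w = 0 := by
  intro k
  induction k with
  | zero =>
    intro w hw hne h
    simpa using cls_of_rank_gt (by simpa using h)
  | succ k ih =>
    intro w hw hne h
    obtain ⟨w', hg', hr', he'⟩ := exists_double n hw hne
    have hne' : w' ≠ [] := by
      intro h0
      rw [h0] at hr'
      simp [rank] at hr'
    have : (2 : ℕ) ^ (k + 1) • cls n w = 2 ^ k • (2 • cls n w) := by
      rw [smul_smul, pow_succ]
    rw [this, he', smul_neg, ih w' hg' hne' (by omega), neg_zero]

lemma rank_one_eq {w : List ℕ} (hw : IsGauss w) (h : rank w = 1) :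
    ∃ a, w = [a, a] := by
  obtain ⟨a, ha⟩ := List.length_eq_one_iff.mp h
  have hall : ∀ b ∈ w, a = b := by
    intro b hb
    have : b ∈ w.dedup := List.mem_dedup.mpr hb
    rw [ha] at this
    have hba : b = a := by simpa using this
    exact hba.symm
  have haw : a ∈ w := by
    have : a ∈ w.dedup := by rw [ha]; simp
    exact List.mem_dedup.mp this
  have hlen : w.length = 2 := by
    rw [← hw a haw]
    exact (List.count_eq_length.mpr hall).symm
  obtain ⟨b, c, rfl⟩ := List.length_eq_two.mp hlen
  obtain rfl : a = b := hall b (by simp)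
  obtain rfl : a = c := hall c (by simp)
  exact ⟨a, rfl⟩

lemma gen_kill (n : ℕ) (w : List ℕ) : 2 ^ (n - 1) • cls n w = 0 := by
  by_cases hg : IsGauss w
  · rcases eq_or_ne w [] with rfl | hne
    · rw [cls_nil, smul_zero]
    · have hrank1 : 1 ≤ rank w := by
        have : w.dedup ≠ [] := by
          intro h
          exact hne ((List.dedup_eq_nil w).mp h)
        have := List.length_pos_iff.mpr this
        simpa [rank, Nat.one_le_iff_ne_zero, Nat.pos_iff_ne_zero] using this
      rcases eq_or_lt_of_le hrank1 with h1 | h2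
      · obtain ⟨a, rfl⟩ := rank_one_eq hg h1.symm
        have : cls n [a, a] = 0 := by
          have := cls_G1 (n := n) (x := []) (y := []) (A := a)
            (by simpa using hg)
          simpa using this
        rw [this, smul_zero]
      · exact pow_smul_cls n (n - 1) w hg hne (by omega)
  · rw [cls_of_notGauss hg, smul_zero]

lemma all_kill (n : ℕ) (x : H n) : 2 ^ (n - 1) • x = 0 := by
  refine QuotientAddGroup.induction_on x ?_
  intro a
  refine FreeAbelianGroup.induction_on a ?_ ?_ ?_ ?_
  · show (2 : ℕ) ^ (n - 1) • clsHom n 0 = 0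
    rw [map_zero, smul_zero]
  · intro w
    exact gen_kill n w
  · intro w hw
    show (2 : ℕ) ^ (n - 1) • clsHom n (-of w) = 0
    rw [map_neg, smul_neg, clsHom_of]
    rw [gen_kill n w, neg_zero]
  · intro a b ha hb
    show (2 : ℕ) ^ (n - 1) • clsHom n (a + b) = 0
    rw [map_add, smul_add]
    exact by
      have ha' : (2 : ℕ) ^ (n - 1) • clsHom n a = 0 := ha
      have hb' : (2 : ℕ) ^ (n - 1) • clsHom n b = 0 := hb
      rw [ha', hb', add_zero]

/-- The finite set of normal forms: words of length at most `2n` with letters `< n`. -/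
def normalWords (n : ℕ) : Set (List ℕ) :=
  {l : List ℕ | l.length ≤ 2 * n ∧ ∀ a ∈ l, a < n}

lemma normalWords_finite (n : ℕ) : (normalWords n).Finite := by
  classical
  have h1 : {l : List (Fin n) | l.length ≤ 2 * n}.Finite := List.finite_length_le (Fin n) (2 * n)
  have h2 := h1.image (fun l : List (Fin n) => l.map (Fin.val))
  refine h2.subset ?_
  rintro l ⟨hlen, hlt⟩
  refine ⟨l.pmap (fun a h => (⟨a, h⟩ : Fin n)) hlt, ?_, ?_⟩
  · simp [Set.mem_setOf_eq, hlen]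
  · show List.map Fin.val (List.pmap (fun a h => (⟨a, h⟩ : Fin n)) l hlt) = l
    rw [List.map_pmap]
    exact (List.pmap_eq_map (f := id) hlt).trans (List.map_id l)

lemma cls_mem_closure (n : ℕ) (w : List ℕ) :
    cls n w ∈ AddSubgroup.closure ((fun v => cls n v) '' normalWords n) := by
  classical
  by_cases hg : IsGauss w
  · by_cases hr : n < rank w
    · rw [cls_of_rank_gt hr]; exact AddSubgroup.zero_mem _
    · push_neg at hr
      -- normalize w by relabeling
      set f : ℕ → ℕ := fun a => if a ∈ w then w.dedup.idxOf a else rank w + a with hfdef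
      have hinj : Function.Injective f := by
        intro a b hab
        by_cases haw : a ∈ w <;> by_cases hbw : b ∈ w
        · have ha' : a ∈ w.dedup := List.mem_dedup.mpr haw
          have hb' : b ∈ w.dedup := List.mem_dedup.mpr hbw
          rw [hfdef] at hab
          simp only [haw, hbw, if_pos] at hab
          exact (List.idxOf_inj ha').mp hab
        · exfalso
          have ha' : a ∈ w.dedup := List.mem_dedup.mpr haw
          have hlt := List.idxOf_lt_length_iff.mpr ha'
          simp only [hfdef, if_pos haw, if_neg hbw] at hab
          have hdl : w.dedup.length = rank w := rfl
          omega
        · exfalso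
          have hb' : b ∈ w.dedup := List.mem_dedup.mpr hbw
          have hlt := List.idxOf_lt_length_iff.mpr hb'
          simp only [hfdef, if_neg haw, if_pos hbw] at hab
          have hdl : w.dedup.length = rank w := rfl
          omega
        · rw [hfdef] at hab
          simp only [haw, hbw, if_neg, if_false] at hab
          omega
      have hiso : Isomorphic w (w.map f) := ⟨f, hinj, rfl⟩
      rw [cls_iso hiso]
      refine AddSubgroup.subset_closure ⟨w.map f, ⟨?_, ?_⟩, rfl⟩
      · rw [List.length_map, gauss_length hg]
        omega
      · intro a ha
        obtain ⟨b, hbw, rfl⟩ := List.mem_map.mp ha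
        rw [hfdef]
        simp only [hbw, if_pos]
        have : w.dedup.idxOf b < w.dedup.length :=
          List.idxOf_lt_length_iff.mpr (List.mem_dedup.mpr hbw)
        have : w.dedup.idxOf b < rank w := this
        omega
  · rw [cls_of_notGauss hg]; exact AddSubgroup.zero_mem _

lemma H_fg (n : ℕ) : AddGroup.FG (H n) := by
  rw [AddGroup.fg_iff]
  refine ⟨(fun v => cls n v) '' normalWords n, ?_, (normalWords_finite n).image _⟩
  rw [eq_top_iff]
  rintro x -
  refine QuotientAddGroup.induction_on x ?_
  intro a
  refine FreeAbelianGroup.induction_on a ?_ ?_ ?_ ?_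
  · exact AddSubgroup.zero_mem _
  · intro w; exact cls_mem_closure n w
  · intro w hw
    show clsHom n (-of w) ∈ _
    rw [map_neg]
    exact AddSubgroup.neg_mem _ (cls_mem_closure n w)
  · intro a b ha hb
    show clsHom n (a + b) ∈ _
    rw [map_add]
    exact AddSubgroup.add_mem _ ha hb

lemma H_finite (n : ℕ) : Finite (H n) := by
  have := H_fg n
  refine AddCommGroup.finite_of_fg_torsion (H n) ?_
  intro x
  rw [isOfFinAddOrder_iff_nsmul_eq_zero]
  exact ⟨2 ^ (n - 1), Nat.pow_pos (by norm_num), all_kill n x⟩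

/-- Transport `ZMod` along an equality of moduli. -/
def zmodCongr {a b : ℕ} (h : a = b) : ZMod a ≃+ ZMod b :=
  (ZMod.ringEquivCongr h).toAddEquiv

/-- Every element of H_n is killed by 2^(n-1); consequently H_n is a finite
abelian 2-group, isomorphic to a finite direct sum of cyclic 2-groups. -/
theorem H_two_group_structure (n : ℕ) :
    (∀ x : H n, (2 ^ (n - 1)) • x = 0) ∧
    Finite (H n) ∧
    ∃ (s : ℕ) (e : Fin s → ℕ),
      Nonempty (H n ≃+ ((i : Fin s) → ZMod (2 ^ (e i)))) := by
  classical
  refine ⟨all_kill n, H_finite n, ?_⟩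
  have : Finite (H n) := H_finite n
  obtain ⟨ι, fι, p, hp, e, ⟨f⟩⟩ := AddCommGroup.equiv_directSum_zmod_of_finite (H n)
  haveI := fι
  -- every modulus is a power of 2
  have hpow : ∀ i : ι, p i ^ e i = 2 ^ (if p i = 2 then e i else 0) := by
    intro i
    by_cases h2 : p i = 2
    · rw [if_pos h2, h2]
    · rw [if_neg h2, pow_zero]
      -- show e i = 0
      rcases Nat.eq_zero_or_pos (e i) with h0 | hpos
      · rw [h0, pow_zero]
      · exfalso
        haveI : NeZero (p i ^ e i) := ⟨pow_ne_zero _ (hp i).ne_zero⟩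
        have hx := all_kill n (f.symm (DirectSum.of (fun j => ZMod (p j ^ e j)) i 1))
        have hx2 : (2 : ℕ) ^ (n - 1) • (DirectSum.of (fun j => ZMod (p j ^ e j)) i 1) = 0 := by
          have := congrArg f hx
          rw [map_nsmul, map_zero, AddEquiv.apply_symm_apply] at this
          exact this
        have hx3 : (2 : ℕ) ^ (n - 1) • (1 : ZMod (p i ^ e i)) = 0 := by
          have := congrArg (DFinsupp.evalAddMonoidHom (β := fun j => ZMod (p j ^ e j)) i) hx2
          have h5 : (DFinsupp.evalAddMonoidHom (β := fun j => ZMod (p j ^ e j)) i)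
              ((DirectSum.of (fun j => ZMod (p j ^ e j)) i) 1) = 1 := DirectSum.of_eq_same i 1
          rw [map_nsmul, map_zero, h5] at this
          exact this
        have hx4 : ((2 ^ (n - 1) : ℕ) : ZMod (p i ^ e i)) = 0 := by
          rw [nsmul_eq_mul, mul_one] at hx3
          exact hx3
        have hdvd : p i ^ e i ∣ 2 ^ (n - 1) :=
          (ZMod.natCast_eq_zero_iff _ _).mp hx4
        have hpdvd : p i ∣ 2 ^ (n - 1) := dvd_trans (dvd_pow_self _ hpos.ne') hdvd
        have : p i ∣ 2 := (Nat.Prime.dvd_of_dvd_pow (hp i)) hpdvd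
        exact h2 ((Nat.prime_dvd_prime_iff_eq (hp i) Nat.prime_two).mp this)
  set e' : ι → ℕ := fun i => if p i = 2 then e i else 0 with he'def
  set s : ℕ := Fintype.card ι with hsdef
  set eqv : ι ≃ Fin s := Fintype.equivFin ι with heqvdef
  refine ⟨s, fun j => e' (eqv.symm j), ⟨?_⟩⟩
  refine f.trans ?_
  refine (DirectSum.addEquivProd (fun i => ZMod (p i ^ e i))).trans ?_
  refine (AddEquiv.piCongrRight (fun i => zmodCongr (hpow i))).trans ?_
  exact (RingEquiv.piCongrLeft' (fun i => ZMod (2 ^ e' i)) eqv).toAddEquiv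
end

section
/- The Gauss word ABACDCBD is not homotopic to the Gauss word ABACBDCD. -/
/-! ### Invariant infrastructure -/

def canon (s : List ℕ) : List ℕ := s.map (fun a => s.dedup.idxOf a)

def W0 : List (List ℕ) :=
  [[0,1,0,2,3,2,1,3],[0,1,2,0,2,3,1,3],[0,1,2,0,3,1,3,2],
   [0,1,2,1,3,0,2,3],[0,1,2,3,1,3,0,2],[0,1,2,3,2,0,3,1]]

def W : List (List ℕ) := W0.map canon

def P (s : List ℕ) : ZMod 2 := if canon s ∈ W then 1 else 0

def C (l : List ℕ) (f : List ℕ → ZMod 2) : ZMod 2 := (l.sublists.map f).sum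

def G (p : List ℕ) : ZMod 2 := C p P

lemma C_congr {l : List ℕ} {f g : List ℕ → ZMod 2}
    (h : ∀ s ∈ l.sublists, f s = g s) : C l f = C l g := by
  unfold C; congr 1; exact List.map_congr_left h

lemma C_zero {l : List ℕ} {f : List ℕ → ZMod 2}
    (h : ∀ s ∈ l.sublists, f s = 0) : C l f = 0 := by
  unfold C
  apply List.sum_eq_zero
  intro x hx
  obtain ⟨s, hs, rfl⟩ := List.mem_map.1 hx
  exact h s hs

lemma sum_map_add {l : List (List ℕ)} (f g : List ℕ → ZMod 2) :
    (l.map (fun s => f s + g s)).sum = (l.map f).sum + (l.map g).sum := by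
  induction l with
  | nil => simp
  | cons a l ih => simp [ih]; ring

lemma C_add {l : List ℕ} (f g : List ℕ → ZMod 2) :
    C l (fun s => f s + g s) = C l f + C l g := sum_map_add f g

lemma C_nil (f : List ℕ → ZMod 2) : C [] f = f [] := by
  simp [C, List.sublists]

lemma C_cons (a : ℕ) (l : List ℕ) (f : List ℕ → ZMod 2) :
    C (a :: l) f = C l f + C l (fun s => f (a :: s)) := by
  unfold C
  rw [List.sublists_cons]
  rw [show ((do let x ← l.sublists; [x, a :: x]) : List (List ℕ))
      = l.sublists.flatMap (fun x => [x, a :: x]) from rfl]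
  induction l.sublists with
  | nil => simp
  | cons s t ih => simp at ih ⊢; rw [ih]; ring

lemma C_append (l₁ l₂ : List ℕ) (f : List ℕ → ZMod 2) :
    C (l₁ ++ l₂) f = C l₁ (fun s₁ => C l₂ (fun s₂ => f (s₁ ++ s₂))) := by
  induction l₁ generalizing f with
  | nil => simp [C, List.sublists]
  | cons a l ih =>
      rw [List.cons_append, C_cons, ih, C_cons, ih]
      simp only [List.cons_append]

lemma not_mem_of_mem_sublists {a : ℕ} {s l : List ℕ}
    (h : s ∈ l.sublists) (ha : a ∉ l) : a ∉ s :=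
  fun hc => ha (List.Sublist.mem hc (List.mem_sublists.1 h))

/-! ### canon lemmas -/

lemma dedup_map_injOn (f : ℕ → ℕ) :
    ∀ (l : List ℕ), (∀ b ∈ l, ∀ c ∈ l, f b = f c → b = c) →
    (l.map f).dedup = l.dedup.map f := by
  intro l
  induction l with
  | nil => simp
  | cons a l ih =>
      intro h
      have hfl : f a ∈ l.map f ↔ a ∈ l := by
        constructor
        · rintro hm
          obtain ⟨b, hb, hfb⟩ := List.mem_map.1 hm
          have := h b (by simp [hb]) a (by simp) hfb
          rwa [← this]
        · intro hm; exact List.mem_map.2 ⟨a, hm, rfl⟩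
      have ih' := ih (fun b hb c hc => h b (by simp [hb]) c (by simp [hc]))
      by_cases hm : a ∈ l
      · rw [List.map_cons, List.dedup_cons_of_mem hm,
          List.dedup_cons_of_mem (hfl.2 hm), ih']
      · rw [List.map_cons, List.dedup_cons_of_notMem (fun hc => hm (hfl.1 hc)),
          List.dedup_cons_of_notMem hm, List.map_cons, ih']

lemma indexOf_map_injOn (f : ℕ → ℕ) :
    ∀ (d : List ℕ), (∀ b ∈ d, ∀ c ∈ d, f b = f c → b = c) →
    ∀ a ∈ d, (d.map f).idxOf (f a) = d.idxOf a := by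
  intro d
  induction d with
  | nil => simp
  | cons b d ih =>
      intro h a ha
      rw [List.map_cons, List.idxOf_cons, List.idxOf_cons]
      by_cases hab : b = a
      · subst hab; simp
      · have hfab : ¬ (f b = f a) := by
          intro he
          rcases List.mem_cons.1 ha with rfl | ha'
          · exact hab rfl
          · exact hab (h b (by simp) a (by simp [ha']) he)
        simp only [show (b == a) = false from beq_eq_false_iff_ne.2 hab,
          show (f b == f a) = false from beq_eq_false_iff_ne.2 hfab, cond_false]
        rcases List.mem_cons.1 ha with rfl | ha'
        · exact absurd rfl hab
        · rw [ih (fun u hu v hv => h u (by simp [hu]) v (by simp [hv])) a ha']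

lemma canon_map_injOn {f : ℕ → ℕ} {u : List ℕ}
    (hf : ∀ b ∈ u, ∀ c ∈ u, f b = f c → b = c) :
    canon (u.map f) = canon u := by
  unfold canon
  rw [List.map_map]
  apply List.map_congr_left
  intro a ha
  have hd : (u.map f).dedup = u.dedup.map f := dedup_map_injOn f u hf
  simp only [Function.comp_apply, hd]
  exact indexOf_map_injOn f u.dedup
    (fun b hb c hc => hf b (List.mem_dedup.1 hb) c (List.mem_dedup.1 hc))
    a (List.mem_dedup.2 ha)

lemma P_relabel {f : ℕ → ℕ} {u : List ℕ}
    (hf : ∀ b ∈ u, ∀ c ∈ u, f b = f c → b = c) :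
    P (u.map f) = P u := by
  unfold P
  rw [canon_map_injOn hf]

/-! ### P vanishing lemmas -/

def noAdj : List ℕ → Bool
  | a :: b :: l => a ≠ b && noAdj (b :: l)
  | _ => true

lemma noAdj_chain' : ∀ (l : List ℕ), noAdj l = true → List.Chain' (· ≠ ·) l
  | [] , _ => List.isChain_nil
  | [_], _ => List.isChain_singleton _
  | a :: b :: l, h => by
      simp only [noAdj, Bool.and_eq_true, decide_eq_true_eq] at h
      exact List.isChain_cons_cons.2 ⟨by simpa using h.1, noAdj_chain' (b :: l) h.2⟩

lemma count_map_injOn (f : ℕ → ℕ) :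
    ∀ (l : List ℕ) (a : ℕ), a ∈ l → (∀ b ∈ l, f b = f a → b = a) →
    (l.map f).count (f a) = l.count a := by
  intro l
  induction l with
  | nil => simp
  | cons b l ih =>
      intro a ha h
      rw [List.map_cons, List.count_cons, List.count_cons]
      by_cases hb : b = a
      · subst hb
        simp only [beq_self_eq_true, if_true]
        by_cases hm : b ∈ l
        · rw [ih b hm (fun c hc => h c (by simp [hc]))]
        · rw [List.count_eq_zero_of_not_mem hm, List.count_eq_zero_of_not_mem]
          intro hc
          obtain ⟨c, hcl, hfc⟩ := List.mem_map.1 hc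
          exact hm (h c (by simp [hcl]) hfc ▸ hcl)
      · have hfb : ¬ f b = f a := fun he => hb (h b (by simp) he)
        rw [show (b == a) = false from beq_eq_false_iff_ne.2 hb,
          show (f b == f a) = false from beq_eq_false_iff_ne.2 hfb]
        simp only [Bool.false_eq_true, if_false]
        rcases List.mem_cons.1 ha with rfl | ha'
        · exact absurd rfl hb
        · rw [ih a ha' (fun c hc => h c (by simp [hc]))]

lemma canon_count {s : List ℕ} {a : ℕ} (ha : a ∈ s) :
    (canon s).count (s.dedup.idxOf a) = s.count a := by
  have key : ∀ b ∈ s, s.dedup.idxOf b = s.dedup.idxOf a → b = a := by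
    intro b hb he
    exact (List.idxOf_inj (List.mem_dedup.2 hb)).1 he
  exact count_map_injOn _ s a ha key

lemma P_count_one {u : List ℕ} (a : ℕ) (h : u.count a = 1) : P u = 0 := by
  unfold P
  rw [if_neg]
  intro hmem
  have ha : a ∈ u := List.count_pos_iff.1 (by omega)
  have h1 : (canon u).count (u.dedup.idxOf a) = 1 := by rw [canon_count ha, h]
  have h2 : ∀ w ∈ W, ∀ b ∈ w, w.count b = 2 := by decide
  have hk : u.dedup.idxOf a ∈ canon u := List.count_pos_iff.1 (by omega)
  have := h2 _ hmem _ hk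
  omega

lemma P_length {u : List ℕ} (h : u.length ≠ 8) : P u = 0 := by
  unfold P
  rw [if_neg]
  intro hmem
  have h8 : ∀ w ∈ W, w.length = 8 := by decide
  have := h8 _ hmem
  rw [show (canon u).length = u.length from List.length_map _] at this
  exact h this

lemma chain'_no_adj (a : ℕ) :
    ∀ (v₁ v₂ : List ℕ), ¬ List.Chain' (· ≠ ·) (v₁ ++ a :: a :: v₂) := by
  intro v₁
  induction v₁ with
  | nil => intro v₂ h; exact (List.isChain_cons_cons.1 h).1 rfl
  | cons b v₁ ih => intro v₂ h; exact ih v₂ (List.IsChain.tail h)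

lemma P_adj (u v : List ℕ) (a : ℕ) : P (u ++ a :: a :: v) = 0 := by
  unfold P
  rw [if_neg]
  intro hmem
  have hch : ∀ w ∈ W, noAdj w = true := by decide
  have := noAdj_chain' _ (hch _ hmem)
  unfold canon at this
  rw [List.map_append, List.map_cons, List.map_cons] at this
  exact chain'_no_adj _ _ _ this

/-! ### finite enumeration -/

def wordsOver (alph : List ℕ) : ℕ → List (List ℕ)
  | 0 => [[]]
  | n+1 => alph.flatMap (fun c => (wordsOver alph n).map (c :: ·))

def wordsC (k n : ℕ) : List (List ℕ) :=
  (wordsOver (List.range' k n) n).filter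
    (fun w => w.dedup == List.range' k w.dedup.length)

lemma mem_wordsOver {alph : List ℕ} :
    ∀ (l : List ℕ), (∀ c ∈ l, c ∈ alph) → l ∈ wordsOver alph l.length := by
  intro l
  induction l with
  | nil => intro _; simp [wordsOver]
  | cons c l ih =>
      intro h
      show _ ∈ wordsOver alph (l.length + 1)
      unfold wordsOver
      rw [List.mem_flatMap]
      exact ⟨c, h c (by simp), List.mem_map.2 ⟨l, ih (fun b hb => h b (by simp [hb])), rfl⟩⟩

lemma map_indexOf_nodup (k : ℕ) :
    ∀ (d : List ℕ), d.Nodup → d.map (fun c => k + d.idxOf c) = List.range' k d.length := by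
  intro d
  induction d generalizing k with
  | nil => intro _; simp
  | cons c d ih =>
      intro hnd
      rw [List.map_cons, List.idxOf_cons_self, Nat.add_zero,
        List.length_cons, List.range'_succ]
      congr 1
      · rw [show d.map (fun b => k + (c :: d).idxOf b)
            = d.map (fun b => (k+1) + d.idxOf b) from ?_,
          ih (k+1) hnd.of_cons]
        apply List.map_congr_left
        intro b hb
        have hbc : ¬ (c == b) = true := by
          simp only [beq_iff_eq]
          intro he; exact (List.nodup_cons.1 hnd).1 (he ▸ hb)
        rw [List.idxOf_cons]
        simp only [hbc, cond_false]
        omega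
-- dev: H2core
set_option maxRecDepth 100000 in
set_option maxHeartbeats 8000000 in
lemma finH2 : ∀ σ ∈ wordsC 2 4, ∀ i ∈ List.range 5, ∀ j ∈ List.range 5,
    i ≤ j →
    P (σ.take i ++ 0 :: 1 :: ((σ.drop i).take (j-i) ++ 1 :: 0 :: σ.drop j)) = 0 := by
  decide

lemma H2core {A B : ℕ} (hAB : A ≠ B) {s1 s2 s3 : List ℕ}
    (hA1 : A ∉ s1) (hA2 : A ∉ s2) (hA3 : A ∉ s3)
    (hB1 : B ∉ s1) (hB2 : B ∉ s2) (hB3 : B ∉ s3) :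
    P (s1 ++ A :: B :: (s2 ++ B :: A :: s3)) = 0 := by
  set u := s1 ++ A :: B :: (s2 ++ B :: A :: s3) with hu
  set σ := s1 ++ (s2 ++ s3) with hσ
  have hlen : u.length = σ.length + 4 := by simp [hu, hσ]; omega
  by_cases hl : σ.length = 4
  case neg => exact P_length (by omega)
  -- relabel
  set f : ℕ → ℕ := fun n => if n = A then 0 else if n = B then 1 else 2 + σ.dedup.idxOf n with hf
  have fA : f A = 0 := by simp [hf]
  have fB : f B = 1 := by simp [hf, Ne.symm hAB]
  have hAσ : A ∉ σ := by simp [hσ]; tauto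
  have hBσ : B ∉ σ := by simp [hσ]; tauto
  have fσ : ∀ c ∈ σ, f c = 2 + σ.dedup.idxOf c := by
    intro c hc
    have : c ≠ A := fun h => hAσ (h ▸ hc)
    have : c ≠ B := fun h => hBσ (h ▸ hc)
    simp [hf, *]
  have humem : ∀ a ∈ u, a = A ∨ a = B ∨ a ∈ σ := by
    intro a ha
    simp [hu] at ha
    simp [hσ]
    tauto
  have hinjσ : ∀ b ∈ σ, ∀ c ∈ σ, f b = f c → b = c := by
    intro b hb c hc he
    rw [fσ b hb, fσ c hc] at he
    exact (List.idxOf_inj (List.mem_dedup.2 hb)).1 (by omega)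
  have hinj : ∀ b ∈ u, ∀ c ∈ u, f b = f c → b = c := by
    intro b hb c hc he
    rcases humem b hb with rfl | rfl | hbσ <;> rcases humem c hc with rfl | rfl | hcσ
    · rfl
    · rw [fA, fB] at he; omega
    · rw [fA, fσ c hcσ] at he; omega
    · rw [fA, fB] at he; omega
    · rfl
    · rw [fB, fσ c hcσ] at he; omega
    · rw [fA, fσ b hbσ] at he; omega
    · rw [fB, fσ b hbσ] at he; omega
    · exact hinjσ b hbσ c hcσ he
  rw [← P_relabel hinj]
  have hmap : u.map f = s1.map f ++ 0 :: 1 :: (s2.map f ++ 1 :: 0 :: s3.map f) := by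
    simp [hu, fA, fB]
  -- σ' properties
  have hσ' : σ.map f = s1.map f ++ (s2.map f ++ s3.map f) := by simp [hσ]
  have hdσ' : (σ.map f).dedup = List.range' 2 σ.dedup.length := by
    rw [dedup_map_injOn f σ hinjσ]
    rw [List.map_congr_left (fun c hc => fσ c (List.mem_dedup.1 hc))]
    exact map_indexOf_nodup 2 σ.dedup (List.nodup_dedup σ)
  have hdlen : σ.dedup.length ≤ 4 := by
    have := List.Sublist.length_le (List.dedup_sublist σ)
    omega
  have hσ'mem : σ.map f ∈ wordsC 2 4 := by
    rw [wordsC, List.mem_filter]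
    constructor
    · have := mem_wordsOver (alph := List.range' 2 4) (σ.map f) ?_
      · rwa [List.length_map, hl] at this
      · intro c hc
        obtain ⟨b, hb, rfl⟩ := List.mem_map.1 hc
        rw [fσ b hb]
        have : b ∈ σ.dedup := List.mem_dedup.2 hb
        have : σ.dedup.idxOf b < σ.dedup.length := List.idxOf_lt_length_iff.2 this
        simp [List.mem_range'_1]
        omega
    · rw [hdσ']
      simp
  have hl1 : s1.length ≤ 4 := by simp [hσ] at hl; omega
  have hl12 : s1.length + s2.length ≤ 4 := by simp [hσ] at hl; omega
  have key := finH2 (σ.map f) hσ'mem s1.length (by simp [List.mem_range]; omega)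
    (s1.length + s2.length) (by simp [List.mem_range]; omega) (by omega)
  have ht1 : (σ.map f).take s1.length = s1.map f := by
    rw [hσ', ← List.length_map (as := s1) f, List.take_left]
  have hd1 : (σ.map f).drop s1.length = s2.map f ++ s3.map f := by
    rw [hσ', ← List.length_map (as := s1) f, List.drop_left]
  have ht2 : ((σ.map f).drop s1.length).take (s1.length + s2.length - s1.length) = s2.map f := by
    rw [hd1, show s1.length + s2.length - s1.length = (s2.map f).length by simp, List.take_left]
  have hd2 : (σ.map f).drop (s1.length + s2.length) = s3.map f := by
    rw [hσ', show s1.length + s2.length = (s1.map f ++ s2.map f).length by simp,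
      ← List.append_assoc, List.drop_left]
  rw [ht1, ht2, hd2] at key
  rw [hmap]
  exact key

lemma CCCP_zero {x y z : List ℕ} {F : List ℕ → List ℕ → List ℕ → List ℕ}
    (h : ∀ s1 ∈ x.sublists, ∀ s2 ∈ y.sublists, ∀ s3 ∈ z.sublists, P (F s1 s2 s3) = 0) :
    C x (fun s1 => C y fun s2 => C z fun s3 => P (F s1 s2 s3)) = 0 :=
  C_zero (fun s1 h1 => C_zero (fun s2 h2 => C_zero (fun s3 h3 => h s1 h1 s2 h2 s3 h3)))

def swp (A B : ℕ) : ℕ → ℕ := fun n => if n = A then B else if n = B then A else n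

lemma swp_inj (A B : ℕ) : Function.Injective (swp A B) := by
  intro a b
  unfold swp
  split_ifs <;> omega

lemma P_swp (A B : ℕ) (u : List ℕ) : P (u.map (swp A B)) = P u :=
  P_relabel (fun b _ c _ h => swp_inj A B h)

lemma GH2 (x y z : List ℕ) (A B : ℕ) (hAB : A ≠ B)
    (hA : A ∉ x ++ y ++ z) (hB : B ∉ x ++ y ++ z) :
    G (x ++ [A, B] ++ y ++ [B, A] ++ z) = G (x ++ y ++ z) := by
  obtain ⟨hAx, hAy, hAz⟩ : A ∉ x ∧ A ∉ y ∧ A ∉ z := by simp at hA; tauto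
  obtain ⟨hBx, hBy, hBz⟩ : B ∉ x ∧ B ∉ y ∧ B ∉ z := by simp at hB; tauto
  have nAx := fun {s : List ℕ} (h : s ∈ x.sublists) =>
    List.count_eq_zero_of_not_mem (not_mem_of_mem_sublists h hAx)
  have nAy := fun {s : List ℕ} (h : s ∈ y.sublists) =>
    List.count_eq_zero_of_not_mem (not_mem_of_mem_sublists h hAy)
  have nAz := fun {s : List ℕ} (h : s ∈ z.sublists) =>
    List.count_eq_zero_of_not_mem (not_mem_of_mem_sublists h hAz)
  have nBx := fun {s : List ℕ} (h : s ∈ x.sublists) =>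
    List.count_eq_zero_of_not_mem (not_mem_of_mem_sublists h hBx)
  have nBy := fun {s : List ℕ} (h : s ∈ y.sublists) =>
    List.count_eq_zero_of_not_mem (not_mem_of_mem_sublists h hBy)
  have nBz := fun {s : List ℕ} (h : s ∈ z.sublists) =>
    List.count_eq_zero_of_not_mem (not_mem_of_mem_sublists h hBz)
  unfold G
  simp only [List.append_assoc]
  simp only [C_append, C_cons, C_nil, C_add, List.cons_append, List.nil_append]
  have t2 : (C x fun s => C y fun s_1 => C z fun s_2 => P (s ++ (s_1 ++ A :: s_2))) = 0 :=
    CCCP_zero (fun s1 h1 s2 h2 s3 h3 => P_count_one A (by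
      simp [List.count_append, List.count_cons, nAx h1, nAy h2, nAz h3]))
  have t3 : (C x fun s => C y fun s_1 => C z fun s_2 => P (s ++ (s_1 ++ B :: s_2))) = 0 :=
    CCCP_zero (fun s1 h1 s2 h2 s3 h3 => P_count_one B (by
      simp [List.count_append, List.count_cons, nBx h1, nBy h2, nBz h3]))
  have t4 : (C x fun s => C y fun s_1 => C z fun s_2 => P (s ++ (s_1 ++ B :: A :: s_2))) = 0 :=
    CCCP_zero (fun s1 h1 s2 h2 s3 h3 => P_count_one A (by
      simp [List.count_append, List.count_cons, nAx h1, nAy h2, nAz h3, Ne.symm hAB]))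
  have t5 : (C x fun s => C y fun s_1 => C z fun s_2 => P (s ++ B :: (s_1 ++ s_2))) = 0 :=
    CCCP_zero (fun s1 h1 s2 h2 s3 h3 => P_count_one B (by
      simp [List.count_append, List.count_cons, nBx h1, nBy h2, nBz h3]))
  have t6 : (C x fun s => C y fun s_1 => C z fun s_2 => P (s ++ B :: (s_1 ++ A :: s_2))) = 0 :=
    CCCP_zero (fun s1 h1 s2 h2 s3 h3 => P_count_one A (by
      simp [List.count_append, List.count_cons, nAx h1, nAy h2, nAz h3, Ne.symm hAB]))
  have t8 : (C x fun s => C y fun s_1 => C z fun s_2 => P (s ++ B :: (s_1 ++ B :: A :: s_2))) = 0 :=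
    CCCP_zero (fun s1 h1 s2 h2 s3 h3 => P_count_one A (by
      simp [List.count_append, List.count_cons, nAx h1, nAy h2, nAz h3, Ne.symm hAB]))
  have t9 : (C x fun s => C y fun s_1 => C z fun s_2 => P (s ++ A :: (s_1 ++ s_2))) = 0 :=
    CCCP_zero (fun s1 h1 s2 h2 s3 h3 => P_count_one A (by
      simp [List.count_append, List.count_cons, nAx h1, nAy h2, nAz h3]))
  have t11 : (C x fun s => C y fun s_1 => C z fun s_2 => P (s ++ A :: (s_1 ++ B :: s_2))) = 0 :=
    CCCP_zero (fun s1 h1 s2 h2 s3 h3 => P_count_one A (by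
      simp [List.count_append, List.count_cons, nAx h1, nAy h2, nAz h3, hAB, Ne.symm hAB]))
  have t12 : (C x fun s => C y fun s_1 => C z fun s_2 => P (s ++ A :: (s_1 ++ B :: A :: s_2))) = 0 :=
    CCCP_zero (fun s1 h1 s2 h2 s3 h3 => P_count_one B (by
      simp [List.count_append, List.count_cons, nBx h1, nBy h2, nBz h3, hAB]))
  have t13 : (C x fun s => C y fun s_1 => C z fun s_2 => P (s ++ A :: B :: (s_1 ++ s_2))) = 0 :=
    CCCP_zero (fun s1 h1 s2 h2 s3 h3 => P_count_one A (by
      simp [List.count_append, List.count_cons, nAx h1, nAy h2, nAz h3, hAB, Ne.symm hAB]))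
  have t14 : (C x fun s => C y fun s_1 => C z fun s_2 => P (s ++ A :: B :: (s_1 ++ A :: s_2))) = 0 :=
    CCCP_zero (fun s1 h1 s2 h2 s3 h3 => P_count_one B (by
      simp [List.count_append, List.count_cons, nBx h1, nBy h2, nBz h3, hAB]))
  have t15 : (C x fun s => C y fun s_1 => C z fun s_2 => P (s ++ A :: B :: (s_1 ++ B :: s_2))) = 0 :=
    CCCP_zero (fun s1 h1 s2 h2 s3 h3 => P_count_one A (by
      simp [List.count_append, List.count_cons, nAx h1, nAy h2, nAz h3, hAB, Ne.symm hAB]))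
  have t16 : (C x fun s => C y fun s_1 => C z fun s_2 => P (s ++ A :: B :: (s_1 ++ B :: A :: s_2))) = 0 :=
    CCCP_zero (fun s1 h1 s2 h2 s3 h3 => H2core hAB
      (not_mem_of_mem_sublists h1 hAx) (not_mem_of_mem_sublists h2 hAy)
      (not_mem_of_mem_sublists h3 hAz) (not_mem_of_mem_sublists h1 hBx)
      (not_mem_of_mem_sublists h2 hBy) (not_mem_of_mem_sublists h3 hBz))
  have t7 : (C x fun s => C y fun s_1 => C z fun s_2 => P (s ++ B :: (s_1 ++ B :: s_2)))
      = (C x fun s => C y fun s_1 => C z fun s_2 => P (s ++ A :: (s_1 ++ A :: s_2))) := by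
    apply C_congr; intro s1 h1; apply C_congr; intro s2 h2; apply C_congr; intro s3 h3
    rw [show s1 ++ A :: (s2 ++ A :: s3) = (s1 ++ B :: (s2 ++ B :: s3)).map (swp A B) from ?_,
      P_swp]
    have e1 : s1.map (swp A B) = s1 := by
      conv_rhs => rw [← List.map_id s1]
      apply List.map_congr_left
      intro a ha
      have haA : ¬ a = A := fun h => (not_mem_of_mem_sublists h1 hAx) (h ▸ ha)
      have haB : ¬ a = B := fun h => (not_mem_of_mem_sublists h1 hBx) (h ▸ ha)
      simp [swp, haA, haB]
    have e2 : s2.map (swp A B) = s2 := by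
      conv_rhs => rw [← List.map_id s2]
      apply List.map_congr_left
      intro a ha
      have haA : ¬ a = A := fun h => (not_mem_of_mem_sublists h2 hAy) (h ▸ ha)
      have haB : ¬ a = B := fun h => (not_mem_of_mem_sublists h2 hBy) (h ▸ ha)
      simp [swp, haA, haB]
    have e3 : s3.map (swp A B) = s3 := by
      conv_rhs => rw [← List.map_id s3]
      apply List.map_congr_left
      intro a ha
      have haA : ¬ a = A := fun h => (not_mem_of_mem_sublists h3 hAz) (h ▸ ha)
      have haB : ¬ a = B := fun h => (not_mem_of_mem_sublists h3 hBz) (h ▸ ha)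
      simp [swp, haA, haB]
    simp [swp, e1, e2, e3, Ne.symm hAB]
  rw [t2, t3, t4, t5, t6, t7, t8, t9, t11, t12, t13, t14, t15, t16]
  generalize (C x fun s => C y fun s_1 => C z fun s₂ => P (s ++ (s_1 ++ s₂))) = T
  generalize (C x fun s => C y fun s_1 => C z fun s_2 => P (s ++ A :: (s_1 ++ A :: s_2))) = S
  revert T S
  decide

set_option maxRecDepth 100000 in
set_option maxHeartbeats 16000000 in
lemma finH3a : ∀ σ ∈ wordsC 3 4, ∀ i ∈ List.range 5, ∀ j ∈ List.range 5, ∀ k ∈ List.range 5,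
    i ≤ j → j ≤ k →
    P (σ.take i ++ 0 :: 1 :: ((σ.drop i).take (j-i) ++ 0 :: ((σ.drop j).take (k-j) ++ 1 :: σ.drop k)))
    + P (σ.take i ++ 0 :: ((σ.drop i).take (j-i) ++ 0 :: 2 :: ((σ.drop j).take (k-j) ++ 2 :: σ.drop k)))
    + P (σ.take i ++ 1 :: ((σ.drop i).take (j-i) ++ 2 :: ((σ.drop j).take (k-j) ++ 1 :: 2 :: σ.drop k)))
    = P (σ.take i ++ 1 :: 0 :: ((σ.drop i).take (j-i) ++ 0 :: ((σ.drop j).take (k-j) ++ 1 :: σ.drop k)))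
    + P (σ.take i ++ 0 :: ((σ.drop i).take (j-i) ++ 2 :: 0 :: ((σ.drop j).take (k-j) ++ 2 :: σ.drop k)))
    + P (σ.take i ++ 1 :: ((σ.drop i).take (j-i) ++ 2 :: ((σ.drop j).take (k-j) ++ 2 :: 1 :: σ.drop k))) := by
  decide

set_option maxRecDepth 100000 in
set_option maxHeartbeats 16000000 in
lemma finH3b : ∀ σ ∈ wordsC 3 2, ∀ i ∈ List.range 3, ∀ j ∈ List.range 3, ∀ k ∈ List.range 3,
    i ≤ j → j ≤ k →
    P (σ.take i ++ 0 :: 1 :: ((σ.drop i).take (j-i) ++ 0 :: 2 :: ((σ.drop j).take (k-j) ++ 1 :: 2 :: σ.drop k)))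
    = P (σ.take i ++ 1 :: 0 :: ((σ.drop i).take (j-i) ++ 2 :: 0 :: ((σ.drop j).take (k-j) ++ 2 :: 1 :: σ.drop k))) := by
  decide

set_option maxHeartbeats 3200000 in
lemma H3core {A B C : ℕ} (hAB : A ≠ B) (hAC : A ≠ C) (hBC : B ≠ C)
    {s1 s2 s3 s4 : List ℕ}
    (hA1 : A ∉ s1) (hA2 : A ∉ s2) (hA3 : A ∉ s3) (hA4 : A ∉ s4)
    (hB1 : B ∉ s1) (hB2 : B ∉ s2) (hB3 : B ∉ s3) (hB4 : B ∉ s4)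
    (hC1 : C ∉ s1) (hC2 : C ∉ s2) (hC3 : C ∉ s3) (hC4 : C ∉ s4) :
    P (s1 ++ A :: B :: (s2 ++ A :: (s3 ++ B :: s4)))
    + P (s1 ++ A :: (s2 ++ A :: C :: (s3 ++ C :: s4)))
    + P (s1 ++ B :: (s2 ++ C :: (s3 ++ B :: C :: s4)))
    + P (s1 ++ A :: B :: (s2 ++ A :: C :: (s3 ++ B :: C :: s4)))
    = P (s1 ++ B :: A :: (s2 ++ A :: (s3 ++ B :: s4)))
    + P (s1 ++ A :: (s2 ++ C :: A :: (s3 ++ C :: s4)))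
    + P (s1 ++ B :: (s2 ++ C :: (s3 ++ C :: B :: s4)))
    + P (s1 ++ B :: A :: (s2 ++ C :: A :: (s3 ++ C :: B :: s4))) := by
  set σ := s1 ++ (s2 ++ (s3 ++ s4)) with hσ
  have hAσ : A ∉ σ := by simp [hσ]; tauto
  have hBσ : B ∉ σ := by simp [hσ]; tauto
  have hCσ : C ∉ σ := by simp [hσ]; tauto
  set f : ℕ → ℕ := fun n => if n = A then 0 else if n = B then 1 else if n = C then 2
    else 3 + σ.dedup.idxOf n with hf
  have fA : f A = 0 := by simp [hf]
  have fB : f B = 1 := by simp [hf, Ne.symm hAB]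
  have fC : f C = 2 := by simp [hf, Ne.symm hAC, Ne.symm hBC]
  have fσ : ∀ c ∈ σ, f c = 3 + σ.dedup.idxOf c := by
    intro c hc
    have : c ≠ A := fun h => hAσ (h ▸ hc)
    have : c ≠ B := fun h => hBσ (h ▸ hc)
    have : c ≠ C := fun h => hCσ (h ▸ hc)
    simp [hf, *]
  have hinjσ : ∀ b ∈ σ, ∀ c ∈ σ, f b = f c → b = c := by
    intro b hb c hc he
    rw [fσ b hb, fσ c hc] at he
    exact (List.idxOf_inj (List.mem_dedup.2 hb)).1 (by omega)
  have hinj : ∀ (u : List ℕ), (∀ a ∈ u, a = A ∨ a = B ∨ a = C ∨ a ∈ σ) →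
      ∀ b ∈ u, ∀ c ∈ u, f b = f c → b = c := by
    intro u hu b hb c hc he
    rcases hu b hb with rfl | rfl | rfl | hbσ <;> rcases hu c hc with rfl | rfl | rfl | hcσ <;>
      first
        | rfl
        | (exact hinjσ _ hbσ _ hcσ he)
        | (simp only [fA, fB, fC] at he; omega)
        | (rw [fσ _ hbσ] at he; simp only [fA, fB, fC] at he; omega)
        | (rw [fσ _ hcσ] at he; simp only [fA, fB, fC] at he; omega)
  have hdσ' : (σ.map f).dedup = List.range' 3 σ.dedup.length := by
    rw [dedup_map_injOn f σ hinjσ]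
    rw [List.map_congr_left (fun c hc => fσ c (List.mem_dedup.1 hc))]
    exact map_indexOf_nodup 3 σ.dedup (List.nodup_dedup σ)
  have hdlen : σ.dedup.length ≤ σ.length := List.Sublist.length_le (List.dedup_sublist σ)
  have hσmem : ∀ (n : ℕ), σ.length = n → σ.map f ∈ wordsC 3 n := by
    intro n hn
    rw [wordsC, List.mem_filter]
    constructor
    · have := mem_wordsOver (alph := List.range' 3 n) (σ.map f) ?_
      · rwa [List.length_map, hn] at this
      · intro c hc
        obtain ⟨b, hb, rfl⟩ := List.mem_map.1 hc
        rw [fσ b hb]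
        have hbd : b ∈ σ.dedup := List.mem_dedup.2 hb
        have : σ.dedup.idxOf b < σ.dedup.length := List.idxOf_lt_length_iff.2 hbd
        simp [List.mem_range'_1]
        omega
    · rw [hdσ']
      simp
  have hLen : σ.length = s1.length + (s2.length + (s3.length + s4.length)) := by simp [hσ]
  have hu1 : ∀ a ∈ (s1 ++ A :: B :: (s2 ++ A :: (s3 ++ B :: s4)) : List ℕ), a = A ∨ a = B ∨ a = C ∨ a ∈ σ := by
    intro a ha
    simp only [hσ]
    simp at ha ⊢
    tauto
  have e1 : P (s1 ++ A :: B :: (s2 ++ A :: (s3 ++ B :: s4))) = P (s1.map f ++ 0 :: 1 :: (s2.map f ++ 0 :: (s3.map f ++ 1 :: s4.map f))) := by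
    rw [← P_relabel (hinj _ hu1), show (s1 ++ A :: B :: (s2 ++ A :: (s3 ++ B :: s4)) : List ℕ).map f = s1.map f ++ 0 :: 1 :: (s2.map f ++ 0 :: (s3.map f ++ 1 :: s4.map f)) by simp [fA, fB, fC]]
  have hu2 : ∀ a ∈ (s1 ++ A :: (s2 ++ A :: C :: (s3 ++ C :: s4)) : List ℕ), a = A ∨ a = B ∨ a = C ∨ a ∈ σ := by
    intro a ha
    simp only [hσ]
    simp at ha ⊢
    tauto
  have e2 : P (s1 ++ A :: (s2 ++ A :: C :: (s3 ++ C :: s4))) = P (s1.map f ++ 0 :: (s2.map f ++ 0 :: 2 :: (s3.map f ++ 2 :: s4.map f))) := by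
    rw [← P_relabel (hinj _ hu2), show (s1 ++ A :: (s2 ++ A :: C :: (s3 ++ C :: s4)) : List ℕ).map f = s1.map f ++ 0 :: (s2.map f ++ 0 :: 2 :: (s3.map f ++ 2 :: s4.map f)) by simp [fA, fB, fC]]
  have hu3 : ∀ a ∈ (s1 ++ B :: (s2 ++ C :: (s3 ++ B :: C :: s4)) : List ℕ), a = A ∨ a = B ∨ a = C ∨ a ∈ σ := by
    intro a ha
    simp only [hσ]
    simp at ha ⊢
    tauto
  have e3 : P (s1 ++ B :: (s2 ++ C :: (s3 ++ B :: C :: s4))) = P (s1.map f ++ 1 :: (s2.map f ++ 2 :: (s3.map f ++ 1 :: 2 :: s4.map f))) := by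
    rw [← P_relabel (hinj _ hu3), show (s1 ++ B :: (s2 ++ C :: (s3 ++ B :: C :: s4)) : List ℕ).map f = s1.map f ++ 1 :: (s2.map f ++ 2 :: (s3.map f ++ 1 :: 2 :: s4.map f)) by simp [fA, fB, fC]]
  have hu4 : ∀ a ∈ (s1 ++ A :: B :: (s2 ++ A :: C :: (s3 ++ B :: C :: s4)) : List ℕ), a = A ∨ a = B ∨ a = C ∨ a ∈ σ := by
    intro a ha
    simp only [hσ]
    simp at ha ⊢
    tauto
  have e4 : P (s1 ++ A :: B :: (s2 ++ A :: C :: (s3 ++ B :: C :: s4))) = P (s1.map f ++ 0 :: 1 :: (s2.map f ++ 0 :: 2 :: (s3.map f ++ 1 :: 2 :: s4.map f))) := by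
    rw [← P_relabel (hinj _ hu4), show (s1 ++ A :: B :: (s2 ++ A :: C :: (s3 ++ B :: C :: s4)) : List ℕ).map f = s1.map f ++ 0 :: 1 :: (s2.map f ++ 0 :: 2 :: (s3.map f ++ 1 :: 2 :: s4.map f)) by simp [fA, fB, fC]]
  have hu5 : ∀ a ∈ (s1 ++ B :: A :: (s2 ++ A :: (s3 ++ B :: s4)) : List ℕ), a = A ∨ a = B ∨ a = C ∨ a ∈ σ := by
    intro a ha
    simp only [hσ]
    simp at ha ⊢
    tauto
  have e5 : P (s1 ++ B :: A :: (s2 ++ A :: (s3 ++ B :: s4))) = P (s1.map f ++ 1 :: 0 :: (s2.map f ++ 0 :: (s3.map f ++ 1 :: s4.map f))) := by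
    rw [← P_relabel (hinj _ hu5), show (s1 ++ B :: A :: (s2 ++ A :: (s3 ++ B :: s4)) : List ℕ).map f = s1.map f ++ 1 :: 0 :: (s2.map f ++ 0 :: (s3.map f ++ 1 :: s4.map f)) by simp [fA, fB, fC]]
  have hu6 : ∀ a ∈ (s1 ++ A :: (s2 ++ C :: A :: (s3 ++ C :: s4)) : List ℕ), a = A ∨ a = B ∨ a = C ∨ a ∈ σ := by
    intro a ha
    simp only [hσ]
    simp at ha ⊢
    tauto
  have e6 : P (s1 ++ A :: (s2 ++ C :: A :: (s3 ++ C :: s4))) = P (s1.map f ++ 0 :: (s2.map f ++ 2 :: 0 :: (s3.map f ++ 2 :: s4.map f))) := by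
    rw [← P_relabel (hinj _ hu6), show (s1 ++ A :: (s2 ++ C :: A :: (s3 ++ C :: s4)) : List ℕ).map f = s1.map f ++ 0 :: (s2.map f ++ 2 :: 0 :: (s3.map f ++ 2 :: s4.map f)) by simp [fA, fB, fC]]
  have hu7 : ∀ a ∈ (s1 ++ B :: (s2 ++ C :: (s3 ++ C :: B :: s4)) : List ℕ), a = A ∨ a = B ∨ a = C ∨ a ∈ σ := by
    intro a ha
    simp only [hσ]
    simp at ha ⊢
    tauto
  have e7 : P (s1 ++ B :: (s2 ++ C :: (s3 ++ C :: B :: s4))) = P (s1.map f ++ 1 :: (s2.map f ++ 2 :: (s3.map f ++ 2 :: 1 :: s4.map f))) := by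
    rw [← P_relabel (hinj _ hu7), show (s1 ++ B :: (s2 ++ C :: (s3 ++ C :: B :: s4)) : List ℕ).map f = s1.map f ++ 1 :: (s2.map f ++ 2 :: (s3.map f ++ 2 :: 1 :: s4.map f)) by simp [fA, fB, fC]]
  have hu8 : ∀ a ∈ (s1 ++ B :: A :: (s2 ++ C :: A :: (s3 ++ C :: B :: s4)) : List ℕ), a = A ∨ a = B ∨ a = C ∨ a ∈ σ := by
    intro a ha
    simp only [hσ]
    simp at ha ⊢
    tauto
  have e8 : P (s1 ++ B :: A :: (s2 ++ C :: A :: (s3 ++ C :: B :: s4))) = P (s1.map f ++ 1 :: 0 :: (s2.map f ++ 2 :: 0 :: (s3.map f ++ 2 :: 1 :: s4.map f))) := by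
    rw [← P_relabel (hinj _ hu8), show (s1 ++ B :: A :: (s2 ++ C :: A :: (s3 ++ C :: B :: s4)) : List ℕ).map f = s1.map f ++ 1 :: 0 :: (s2.map f ++ 2 :: 0 :: (s3.map f ++ 2 :: 1 :: s4.map f)) by simp [fA, fB, fC]]
  rw [e1, e2, e3, e4, e5, e6, e7, e8]
  have hσ' : σ.map f = s1.map f ++ (s2.map f ++ (s3.map f ++ s4.map f)) := by simp [hσ]
  have ht1 : (σ.map f).take s1.length = s1.map f := by
    rw [hσ', ← List.length_map (as := s1) f, List.take_left]
  have hm2 : ((σ.map f).drop s1.length).take (s1.length + s2.length - s1.length) = s2.map f := by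
    rw [show s1.length + s2.length - s1.length = s2.length from by omega]
    rw [hσ', ← List.length_map (as := s1) f, List.drop_left, ← List.length_map (as := s2) f, List.take_left]
  have hm3 : ((σ.map f).drop (s1.length + s2.length)).take
      (s1.length + s2.length + s3.length - (s1.length + s2.length)) = s3.map f := by
    rw [show s1.length + s2.length + s3.length - (s1.length + s2.length) = s3.length from by omega]
    rw [hσ', ← List.append_assoc,
      show s1.length + s2.length = (s1.map f ++ s2.map f).length from by simp, List.drop_left,
      ← List.length_map (as := s3) f, List.take_left]
  have hd4 : (σ.map f).drop (s1.length + s2.length + s3.length) = s4.map f := by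
    rw [hσ', ← List.append_assoc, ← List.append_assoc,
      show s1.length + s2.length + s3.length = (s1.map f ++ s2.map f ++ s3.map f).length
        from by simp; omega,
      List.drop_left]
  by_cases h4 : σ.length = 4
  · have zb4 : P (List.map f s1 ++ 0 :: 1 :: (List.map f s2 ++ 0 :: 2 :: (List.map f s3 ++ 1 :: 2 :: List.map f s4))) = 0 :=
      P_length (by simp; omega)
    have zb8 : P (List.map f s1 ++ 1 :: 0 :: (List.map f s2 ++ 2 :: 0 :: (List.map f s3 ++ 2 :: 1 :: List.map f s4))) = 0 :=
      P_length (by simp; omega)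
    rw [zb4, zb8, add_zero, add_zero]
    have key := finH3a (σ.map f) (hσmem 4 h4)
      s1.length (by simp [List.mem_range]; omega)
      (s1.length + s2.length) (by simp [List.mem_range]; omega)
      (s1.length + s2.length + s3.length) (by simp [List.mem_range]; omega)
      (by omega) (by omega)
    rw [ht1, hm2, hm3, hd4] at key
    exact key
  by_cases h2 : σ.length = 2
  · have za1 : P (List.map f s1 ++ 0 :: 1 :: (List.map f s2 ++ 0 :: (List.map f s3 ++ 1 :: List.map f s4))) = 0 :=
      P_length (by simp; omega)
    have za2 : P (List.map f s1 ++ 0 :: (List.map f s2 ++ 0 :: 2 :: (List.map f s3 ++ 2 :: List.map f s4))) = 0 :=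
      P_length (by simp; omega)
    have za3 : P (List.map f s1 ++ 1 :: (List.map f s2 ++ 2 :: (List.map f s3 ++ 1 :: 2 :: List.map f s4))) = 0 :=
      P_length (by simp; omega)
    have za5 : P (List.map f s1 ++ 1 :: 0 :: (List.map f s2 ++ 0 :: (List.map f s3 ++ 1 :: List.map f s4))) = 0 :=
      P_length (by simp; omega)
    have za6 : P (List.map f s1 ++ 0 :: (List.map f s2 ++ 2 :: 0 :: (List.map f s3 ++ 2 :: List.map f s4))) = 0 :=
      P_length (by simp; omega)
    have za7 : P (List.map f s1 ++ 1 :: (List.map f s2 ++ 2 :: (List.map f s3 ++ 2 :: 1 :: List.map f s4))) = 0 :=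
      P_length (by simp; omega)
    rw [za1, za2, za3, za5, za6, za7]
    simp only [zero_add, add_zero]
    have key := finH3b (σ.map f) (hσmem 2 h2)
      s1.length (by simp [List.mem_range]; omega)
      (s1.length + s2.length) (by simp [List.mem_range]; omega)
      (s1.length + s2.length + s3.length) (by simp [List.mem_range]; omega)
      (by omega) (by omega)
    rw [ht1, hm2, hm3, hd4] at key
    exact key
  · have za1 : P (List.map f s1 ++ 0 :: 1 :: (List.map f s2 ++ 0 :: (List.map f s3 ++ 1 :: List.map f s4))) = 0 :=
      P_length (by simp; omega)
    have za2 : P (List.map f s1 ++ 0 :: (List.map f s2 ++ 0 :: 2 :: (List.map f s3 ++ 2 :: List.map f s4))) = 0 :=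
      P_length (by simp; omega)
    have za3 : P (List.map f s1 ++ 1 :: (List.map f s2 ++ 2 :: (List.map f s3 ++ 1 :: 2 :: List.map f s4))) = 0 :=
      P_length (by simp; omega)
    have za5 : P (List.map f s1 ++ 1 :: 0 :: (List.map f s2 ++ 0 :: (List.map f s3 ++ 1 :: List.map f s4))) = 0 :=
      P_length (by simp; omega)
    have za6 : P (List.map f s1 ++ 0 :: (List.map f s2 ++ 2 :: 0 :: (List.map f s3 ++ 2 :: List.map f s4))) = 0 :=
      P_length (by simp; omega)
    have za7 : P (List.map f s1 ++ 1 :: (List.map f s2 ++ 2 :: (List.map f s3 ++ 2 :: 1 :: List.map f s4))) = 0 :=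
      P_length (by simp; omega)
    have zb4 : P (List.map f s1 ++ 0 :: 1 :: (List.map f s2 ++ 0 :: 2 :: (List.map f s3 ++ 1 :: 2 :: List.map f s4))) = 0 :=
      P_length (by simp; omega)
    have zb8 : P (List.map f s1 ++ 1 :: 0 :: (List.map f s2 ++ 2 :: 0 :: (List.map f s3 ++ 2 :: 1 :: List.map f s4))) = 0 :=
      P_length (by simp; omega)
    rw [za1, za2, za3, za5, za6, za7, zb4, zb8]

lemma CCCCP_zero {x y z t : List ℕ} {F : List ℕ → List ℕ → List ℕ → List ℕ → List ℕ}
    (h : ∀ s1 ∈ x.sublists, ∀ s2 ∈ y.sublists, ∀ s3 ∈ z.sublists, ∀ s4 ∈ t.sublists,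
      P (F s1 s2 s3 s4) = 0) :
    C x (fun s1 => C y fun s2 => C z fun s3 => C t fun s4 => P (F s1 s2 s3 s4)) = 0 :=
  C_zero (fun s1 h1 => C_zero (fun s2 h2 => C_zero (fun s3 h3 => C_zero (fun s4 h4 =>
    h s1 h1 s2 h2 s3 h3 s4 h4))))

set_option maxHeartbeats 8000000 in
lemma GH3 (x y z t : List ℕ) (A B C' : ℕ) (hAB : A ≠ B) (hAC : A ≠ C') (hBC : B ≠ C')
    (hA : A ∉ x ++ y ++ z ++ t) (hB : B ∉ x ++ y ++ z ++ t) (hC : C' ∉ x ++ y ++ z ++ t) :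
    G (x ++ [A, B] ++ y ++ [A, C'] ++ z ++ [B, C'] ++ t)
    = G (x ++ [B, A] ++ y ++ [C', A] ++ z ++ [C', B] ++ t) := by
  obtain ⟨hAx, hAy, hAz, hAt⟩ : A ∉ x ∧ A ∉ y ∧ A ∉ z ∧ A ∉ t := by simp at hA; tauto
  obtain ⟨hBx, hBy, hBz, hBt⟩ : B ∉ x ∧ B ∉ y ∧ B ∉ z ∧ B ∉ t := by simp at hB; tauto
  obtain ⟨hCx, hCy, hCz, hCt⟩ : C' ∉ x ∧ C' ∉ y ∧ C' ∉ z ∧ C' ∉ t := by simp at hC; tauto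
  have nAx := fun {s : List ℕ} (h : s ∈ x.sublists) =>
    List.count_eq_zero_of_not_mem (not_mem_of_mem_sublists h hAx)
  have nAy := fun {s : List ℕ} (h : s ∈ y.sublists) =>
    List.count_eq_zero_of_not_mem (not_mem_of_mem_sublists h hAy)
  have nAz := fun {s : List ℕ} (h : s ∈ z.sublists) =>
    List.count_eq_zero_of_not_mem (not_mem_of_mem_sublists h hAz)
  have nAt := fun {s : List ℕ} (h : s ∈ t.sublists) =>
    List.count_eq_zero_of_not_mem (not_mem_of_mem_sublists h hAt)
  have nBx := fun {s : List ℕ} (h : s ∈ x.sublists) =>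
    List.count_eq_zero_of_not_mem (not_mem_of_mem_sublists h hBx)
  have nBy := fun {s : List ℕ} (h : s ∈ y.sublists) =>
    List.count_eq_zero_of_not_mem (not_mem_of_mem_sublists h hBy)
  have nBz := fun {s : List ℕ} (h : s ∈ z.sublists) =>
    List.count_eq_zero_of_not_mem (not_mem_of_mem_sublists h hBz)
  have nBt := fun {s : List ℕ} (h : s ∈ t.sublists) =>
    List.count_eq_zero_of_not_mem (not_mem_of_mem_sublists h hBt)
  have nCx := fun {s : List ℕ} (h : s ∈ x.sublists) =>
    List.count_eq_zero_of_not_mem (not_mem_of_mem_sublists h hCx)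
  have nCy := fun {s : List ℕ} (h : s ∈ y.sublists) =>
    List.count_eq_zero_of_not_mem (not_mem_of_mem_sublists h hCy)
  have nCz := fun {s : List ℕ} (h : s ∈ z.sublists) =>
    List.count_eq_zero_of_not_mem (not_mem_of_mem_sublists h hCz)
  have nCt := fun {s : List ℕ} (h : s ∈ t.sublists) =>
    List.count_eq_zero_of_not_mem (not_mem_of_mem_sublists h hCt)
  unfold G
  simp only [List.append_assoc]
  simp only [C_append, C_cons, C_nil, C_add, List.cons_append, List.nil_append]
  have kk1 : (C x fun s1 => C y fun s2 => C z fun s3 => C t fun s4 => P (s1 ++ (s2 ++ (s3 ++ C' :: s4)))) = 0 :=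
    CCCCP_zero (fun s1 h1 s2 h2 s3 h3 s4 h4 => P_count_one C' (by
      simp [List.count_append, List.count_cons, nCx h1, nCy h2, nCz h3, nCt h4, hAB, hAC, hBC, Ne.symm hAB, Ne.symm hAC, Ne.symm hBC]))
  have kk2 : (C x fun s1 => C y fun s2 => C z fun s3 => C t fun s4 => P (s1 ++ (s2 ++ (s3 ++ B :: s4)))) = 0 :=
    CCCCP_zero (fun s1 h1 s2 h2 s3 h3 s4 h4 => P_count_one B (by
      simp [List.count_append, List.count_cons, nBx h1, nBy h2, nBz h3, nBt h4, hAB, hAC, hBC, Ne.symm hAB, Ne.symm hAC, Ne.symm hBC]))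
  have kk3 : (C x fun s1 => C y fun s2 => C z fun s3 => C t fun s4 => P (s1 ++ (s2 ++ (s3 ++ B :: C' :: s4)))) = 0 :=
    CCCCP_zero (fun s1 h1 s2 h2 s3 h3 s4 h4 => P_count_one B (by
      simp [List.count_append, List.count_cons, nBx h1, nBy h2, nBz h3, nBt h4, hAB, hAC, hBC, Ne.symm hAB, Ne.symm hAC, Ne.symm hBC]))
  have kk4 : (C x fun s1 => C y fun s2 => C z fun s3 => C t fun s4 => P (s1 ++ (s2 ++ C' :: (s3 ++ s4)))) = 0 :=
    CCCCP_zero (fun s1 h1 s2 h2 s3 h3 s4 h4 => P_count_one C' (by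
      simp [List.count_append, List.count_cons, nCx h1, nCy h2, nCz h3, nCt h4, hAB, hAC, hBC, Ne.symm hAB, Ne.symm hAC, Ne.symm hBC]))
  have kk5 : (C x fun s1 => C y fun s2 => C z fun s3 => C t fun s4 => P (s1 ++ (s2 ++ C' :: (s3 ++ B :: s4)))) = 0 :=
    CCCCP_zero (fun s1 h1 s2 h2 s3 h3 s4 h4 => P_count_one B (by
      simp [List.count_append, List.count_cons, nBx h1, nBy h2, nBz h3, nBt h4, hAB, hAC, hBC, Ne.symm hAB, Ne.symm hAC, Ne.symm hBC]))
  have kk6 : (C x fun s1 => C y fun s2 => C z fun s3 => C t fun s4 => P (s1 ++ (s2 ++ C' :: (s3 ++ B :: C' :: s4)))) = 0 :=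
    CCCCP_zero (fun s1 h1 s2 h2 s3 h3 s4 h4 => P_count_one B (by
      simp [List.count_append, List.count_cons, nBx h1, nBy h2, nBz h3, nBt h4, hAB, hAC, hBC, Ne.symm hAB, Ne.symm hAC, Ne.symm hBC]))
  have kk7 : (C x fun s1 => C y fun s2 => C z fun s3 => C t fun s4 => P (s1 ++ (s2 ++ A :: (s3 ++ s4)))) = 0 :=
    CCCCP_zero (fun s1 h1 s2 h2 s3 h3 s4 h4 => P_count_one A (by
      simp [List.count_append, List.count_cons, nAx h1, nAy h2, nAz h3, nAt h4, hAB, hAC, hBC, Ne.symm hAB, Ne.symm hAC, Ne.symm hBC]))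
  have kk8 : (C x fun s1 => C y fun s2 => C z fun s3 => C t fun s4 => P (s1 ++ (s2 ++ A :: (s3 ++ C' :: s4)))) = 0 :=
    CCCCP_zero (fun s1 h1 s2 h2 s3 h3 s4 h4 => P_count_one A (by
      simp [List.count_append, List.count_cons, nAx h1, nAy h2, nAz h3, nAt h4, hAB, hAC, hBC, Ne.symm hAB, Ne.symm hAC, Ne.symm hBC]))
  have kk9 : (C x fun s1 => C y fun s2 => C z fun s3 => C t fun s4 => P (s1 ++ (s2 ++ A :: (s3 ++ B :: s4)))) = 0 :=
    CCCCP_zero (fun s1 h1 s2 h2 s3 h3 s4 h4 => P_count_one A (by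
      simp [List.count_append, List.count_cons, nAx h1, nAy h2, nAz h3, nAt h4, hAB, hAC, hBC, Ne.symm hAB, Ne.symm hAC, Ne.symm hBC]))
  have kk10 : (C x fun s1 => C y fun s2 => C z fun s3 => C t fun s4 => P (s1 ++ (s2 ++ A :: (s3 ++ B :: C' :: s4)))) = 0 :=
    CCCCP_zero (fun s1 h1 s2 h2 s3 h3 s4 h4 => P_count_one A (by
      simp [List.count_append, List.count_cons, nAx h1, nAy h2, nAz h3, nAt h4, hAB, hAC, hBC, Ne.symm hAB, Ne.symm hAC, Ne.symm hBC]))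
  have kk11 : (C x fun s1 => C y fun s2 => C z fun s3 => C t fun s4 => P (s1 ++ (s2 ++ A :: C' :: (s3 ++ s4)))) = 0 :=
    CCCCP_zero (fun s1 h1 s2 h2 s3 h3 s4 h4 => P_count_one A (by
      simp [List.count_append, List.count_cons, nAx h1, nAy h2, nAz h3, nAt h4, hAB, hAC, hBC, Ne.symm hAB, Ne.symm hAC, Ne.symm hBC]))
  have kk12 : (C x fun s1 => C y fun s2 => C z fun s3 => C t fun s4 => P (s1 ++ (s2 ++ A :: C' :: (s3 ++ C' :: s4)))) = 0 :=
    CCCCP_zero (fun s1 h1 s2 h2 s3 h3 s4 h4 => P_count_one A (by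
      simp [List.count_append, List.count_cons, nAx h1, nAy h2, nAz h3, nAt h4, hAB, hAC, hBC, Ne.symm hAB, Ne.symm hAC, Ne.symm hBC]))
  have kk13 : (C x fun s1 => C y fun s2 => C z fun s3 => C t fun s4 => P (s1 ++ (s2 ++ A :: C' :: (s3 ++ B :: s4)))) = 0 :=
    CCCCP_zero (fun s1 h1 s2 h2 s3 h3 s4 h4 => P_count_one A (by
      simp [List.count_append, List.count_cons, nAx h1, nAy h2, nAz h3, nAt h4, hAB, hAC, hBC, Ne.symm hAB, Ne.symm hAC, Ne.symm hBC]))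
  have kk14 : (C x fun s1 => C y fun s2 => C z fun s3 => C t fun s4 => P (s1 ++ (s2 ++ A :: C' :: (s3 ++ B :: C' :: s4)))) = 0 :=
    CCCCP_zero (fun s1 h1 s2 h2 s3 h3 s4 h4 => P_count_one A (by
      simp [List.count_append, List.count_cons, nAx h1, nAy h2, nAz h3, nAt h4, hAB, hAC, hBC, Ne.symm hAB, Ne.symm hAC, Ne.symm hBC]))
  have kk15 : (C x fun s1 => C y fun s2 => C z fun s3 => C t fun s4 => P (s1 ++ B :: (s2 ++ (s3 ++ s4)))) = 0 :=
    CCCCP_zero (fun s1 h1 s2 h2 s3 h3 s4 h4 => P_count_one B (by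
      simp [List.count_append, List.count_cons, nBx h1, nBy h2, nBz h3, nBt h4, hAB, hAC, hBC, Ne.symm hAB, Ne.symm hAC, Ne.symm hBC]))
  have kk16 : (C x fun s1 => C y fun s2 => C z fun s3 => C t fun s4 => P (s1 ++ B :: (s2 ++ (s3 ++ C' :: s4)))) = 0 :=
    CCCCP_zero (fun s1 h1 s2 h2 s3 h3 s4 h4 => P_count_one B (by
      simp [List.count_append, List.count_cons, nBx h1, nBy h2, nBz h3, nBt h4, hAB, hAC, hBC, Ne.symm hAB, Ne.symm hAC, Ne.symm hBC]))
  have kk17 : (C x fun s1 => C y fun s2 => C z fun s3 => C t fun s4 => P (s1 ++ B :: (s2 ++ (s3 ++ B :: C' :: s4)))) = 0 :=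
    CCCCP_zero (fun s1 h1 s2 h2 s3 h3 s4 h4 => P_count_one C' (by
      simp [List.count_append, List.count_cons, nCx h1, nCy h2, nCz h3, nCt h4, hAB, hAC, hBC, Ne.symm hAB, Ne.symm hAC, Ne.symm hBC]))
  have kk18 : (C x fun s1 => C y fun s2 => C z fun s3 => C t fun s4 => P (s1 ++ B :: (s2 ++ C' :: (s3 ++ s4)))) = 0 :=
    CCCCP_zero (fun s1 h1 s2 h2 s3 h3 s4 h4 => P_count_one B (by
      simp [List.count_append, List.count_cons, nBx h1, nBy h2, nBz h3, nBt h4, hAB, hAC, hBC, Ne.symm hAB, Ne.symm hAC, Ne.symm hBC]))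
  have kk19 : (C x fun s1 => C y fun s2 => C z fun s3 => C t fun s4 => P (s1 ++ B :: (s2 ++ C' :: (s3 ++ C' :: s4)))) = 0 :=
    CCCCP_zero (fun s1 h1 s2 h2 s3 h3 s4 h4 => P_count_one B (by
      simp [List.count_append, List.count_cons, nBx h1, nBy h2, nBz h3, nBt h4, hAB, hAC, hBC, Ne.symm hAB, Ne.symm hAC, Ne.symm hBC]))
  have kk20 : (C x fun s1 => C y fun s2 => C z fun s3 => C t fun s4 => P (s1 ++ B :: (s2 ++ C' :: (s3 ++ B :: s4)))) = 0 :=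
    CCCCP_zero (fun s1 h1 s2 h2 s3 h3 s4 h4 => P_count_one C' (by
      simp [List.count_append, List.count_cons, nCx h1, nCy h2, nCz h3, nCt h4, hAB, hAC, hBC, Ne.symm hAB, Ne.symm hAC, Ne.symm hBC]))
  have kk21 : (C x fun s1 => C y fun s2 => C z fun s3 => C t fun s4 => P (s1 ++ B :: (s2 ++ A :: (s3 ++ s4)))) = 0 :=
    CCCCP_zero (fun s1 h1 s2 h2 s3 h3 s4 h4 => P_count_one A (by
      simp [List.count_append, List.count_cons, nAx h1, nAy h2, nAz h3, nAt h4, hAB, hAC, hBC, Ne.symm hAB, Ne.symm hAC, Ne.symm hBC]))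
  have kk22 : (C x fun s1 => C y fun s2 => C z fun s3 => C t fun s4 => P (s1 ++ B :: (s2 ++ A :: (s3 ++ C' :: s4)))) = 0 :=
    CCCCP_zero (fun s1 h1 s2 h2 s3 h3 s4 h4 => P_count_one A (by
      simp [List.count_append, List.count_cons, nAx h1, nAy h2, nAz h3, nAt h4, hAB, hAC, hBC, Ne.symm hAB, Ne.symm hAC, Ne.symm hBC]))
  have kk23 : (C x fun s1 => C y fun s2 => C z fun s3 => C t fun s4 => P (s1 ++ B :: (s2 ++ A :: (s3 ++ B :: s4)))) = 0 :=
    CCCCP_zero (fun s1 h1 s2 h2 s3 h3 s4 h4 => P_count_one A (by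
      simp [List.count_append, List.count_cons, nAx h1, nAy h2, nAz h3, nAt h4, hAB, hAC, hBC, Ne.symm hAB, Ne.symm hAC, Ne.symm hBC]))
  have kk24 : (C x fun s1 => C y fun s2 => C z fun s3 => C t fun s4 => P (s1 ++ B :: (s2 ++ A :: (s3 ++ B :: C' :: s4)))) = 0 :=
    CCCCP_zero (fun s1 h1 s2 h2 s3 h3 s4 h4 => P_count_one A (by
      simp [List.count_append, List.count_cons, nAx h1, nAy h2, nAz h3, nAt h4, hAB, hAC, hBC, Ne.symm hAB, Ne.symm hAC, Ne.symm hBC]))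
  have kk25 : (C x fun s1 => C y fun s2 => C z fun s3 => C t fun s4 => P (s1 ++ B :: (s2 ++ A :: C' :: (s3 ++ s4)))) = 0 :=
    CCCCP_zero (fun s1 h1 s2 h2 s3 h3 s4 h4 => P_count_one A (by
      simp [List.count_append, List.count_cons, nAx h1, nAy h2, nAz h3, nAt h4, hAB, hAC, hBC, Ne.symm hAB, Ne.symm hAC, Ne.symm hBC]))
  have kk26 : (C x fun s1 => C y fun s2 => C z fun s3 => C t fun s4 => P (s1 ++ B :: (s2 ++ A :: C' :: (s3 ++ C' :: s4)))) = 0 :=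
    CCCCP_zero (fun s1 h1 s2 h2 s3 h3 s4 h4 => P_count_one A (by
      simp [List.count_append, List.count_cons, nAx h1, nAy h2, nAz h3, nAt h4, hAB, hAC, hBC, Ne.symm hAB, Ne.symm hAC, Ne.symm hBC]))
  have kk27 : (C x fun s1 => C y fun s2 => C z fun s3 => C t fun s4 => P (s1 ++ B :: (s2 ++ A :: C' :: (s3 ++ B :: s4)))) = 0 :=
    CCCCP_zero (fun s1 h1 s2 h2 s3 h3 s4 h4 => P_count_one A (by
      simp [List.count_append, List.count_cons, nAx h1, nAy h2, nAz h3, nAt h4, hAB, hAC, hBC, Ne.symm hAB, Ne.symm hAC, Ne.symm hBC]))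
  have kk28 : (C x fun s1 => C y fun s2 => C z fun s3 => C t fun s4 => P (s1 ++ B :: (s2 ++ A :: C' :: (s3 ++ B :: C' :: s4)))) = 0 :=
    CCCCP_zero (fun s1 h1 s2 h2 s3 h3 s4 h4 => P_count_one A (by
      simp [List.count_append, List.count_cons, nAx h1, nAy h2, nAz h3, nAt h4, hAB, hAC, hBC, Ne.symm hAB, Ne.symm hAC, Ne.symm hBC]))
  have kk29 : (C x fun s1 => C y fun s2 => C z fun s3 => C t fun s4 => P (s1 ++ A :: (s2 ++ (s3 ++ s4)))) = 0 :=
    CCCCP_zero (fun s1 h1 s2 h2 s3 h3 s4 h4 => P_count_one A (by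
      simp [List.count_append, List.count_cons, nAx h1, nAy h2, nAz h3, nAt h4, hAB, hAC, hBC, Ne.symm hAB, Ne.symm hAC, Ne.symm hBC]))
  have kk30 : (C x fun s1 => C y fun s2 => C z fun s3 => C t fun s4 => P (s1 ++ A :: (s2 ++ (s3 ++ C' :: s4)))) = 0 :=
    CCCCP_zero (fun s1 h1 s2 h2 s3 h3 s4 h4 => P_count_one A (by
      simp [List.count_append, List.count_cons, nAx h1, nAy h2, nAz h3, nAt h4, hAB, hAC, hBC, Ne.symm hAB, Ne.symm hAC, Ne.symm hBC]))
  have kk31 : (C x fun s1 => C y fun s2 => C z fun s3 => C t fun s4 => P (s1 ++ A :: (s2 ++ (s3 ++ B :: s4)))) = 0 :=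
    CCCCP_zero (fun s1 h1 s2 h2 s3 h3 s4 h4 => P_count_one A (by
      simp [List.count_append, List.count_cons, nAx h1, nAy h2, nAz h3, nAt h4, hAB, hAC, hBC, Ne.symm hAB, Ne.symm hAC, Ne.symm hBC]))
  have kk32 : (C x fun s1 => C y fun s2 => C z fun s3 => C t fun s4 => P (s1 ++ A :: (s2 ++ (s3 ++ B :: C' :: s4)))) = 0 :=
    CCCCP_zero (fun s1 h1 s2 h2 s3 h3 s4 h4 => P_count_one A (by
      simp [List.count_append, List.count_cons, nAx h1, nAy h2, nAz h3, nAt h4, hAB, hAC, hBC, Ne.symm hAB, Ne.symm hAC, Ne.symm hBC]))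
  have kk33 : (C x fun s1 => C y fun s2 => C z fun s3 => C t fun s4 => P (s1 ++ A :: (s2 ++ C' :: (s3 ++ s4)))) = 0 :=
    CCCCP_zero (fun s1 h1 s2 h2 s3 h3 s4 h4 => P_count_one A (by
      simp [List.count_append, List.count_cons, nAx h1, nAy h2, nAz h3, nAt h4, hAB, hAC, hBC, Ne.symm hAB, Ne.symm hAC, Ne.symm hBC]))
  have kk34 : (C x fun s1 => C y fun s2 => C z fun s3 => C t fun s4 => P (s1 ++ A :: (s2 ++ C' :: (s3 ++ C' :: s4)))) = 0 :=
    CCCCP_zero (fun s1 h1 s2 h2 s3 h3 s4 h4 => P_count_one A (by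
      simp [List.count_append, List.count_cons, nAx h1, nAy h2, nAz h3, nAt h4, hAB, hAC, hBC, Ne.symm hAB, Ne.symm hAC, Ne.symm hBC]))
  have kk35 : (C x fun s1 => C y fun s2 => C z fun s3 => C t fun s4 => P (s1 ++ A :: (s2 ++ C' :: (s3 ++ B :: s4)))) = 0 :=
    CCCCP_zero (fun s1 h1 s2 h2 s3 h3 s4 h4 => P_count_one A (by
      simp [List.count_append, List.count_cons, nAx h1, nAy h2, nAz h3, nAt h4, hAB, hAC, hBC, Ne.symm hAB, Ne.symm hAC, Ne.symm hBC]))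
  have kk36 : (C x fun s1 => C y fun s2 => C z fun s3 => C t fun s4 => P (s1 ++ A :: (s2 ++ C' :: (s3 ++ B :: C' :: s4)))) = 0 :=
    CCCCP_zero (fun s1 h1 s2 h2 s3 h3 s4 h4 => P_count_one A (by
      simp [List.count_append, List.count_cons, nAx h1, nAy h2, nAz h3, nAt h4, hAB, hAC, hBC, Ne.symm hAB, Ne.symm hAC, Ne.symm hBC]))
  have kk37 : (C x fun s1 => C y fun s2 => C z fun s3 => C t fun s4 => P (s1 ++ A :: (s2 ++ A :: (s3 ++ C' :: s4)))) = 0 :=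
    CCCCP_zero (fun s1 h1 s2 h2 s3 h3 s4 h4 => P_count_one C' (by
      simp [List.count_append, List.count_cons, nCx h1, nCy h2, nCz h3, nCt h4, hAB, hAC, hBC, Ne.symm hAB, Ne.symm hAC, Ne.symm hBC]))
  have kk38 : (C x fun s1 => C y fun s2 => C z fun s3 => C t fun s4 => P (s1 ++ A :: (s2 ++ A :: (s3 ++ B :: s4)))) = 0 :=
    CCCCP_zero (fun s1 h1 s2 h2 s3 h3 s4 h4 => P_count_one B (by
      simp [List.count_append, List.count_cons, nBx h1, nBy h2, nBz h3, nBt h4, hAB, hAC, hBC, Ne.symm hAB, Ne.symm hAC, Ne.symm hBC]))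
  have kk39 : (C x fun s1 => C y fun s2 => C z fun s3 => C t fun s4 => P (s1 ++ A :: (s2 ++ A :: (s3 ++ B :: C' :: s4)))) = 0 :=
    CCCCP_zero (fun s1 h1 s2 h2 s3 h3 s4 h4 => P_count_one B (by
      simp [List.count_append, List.count_cons, nBx h1, nBy h2, nBz h3, nBt h4, hAB, hAC, hBC, Ne.symm hAB, Ne.symm hAC, Ne.symm hBC]))
  have kk40 : (C x fun s1 => C y fun s2 => C z fun s3 => C t fun s4 => P (s1 ++ A :: (s2 ++ A :: C' :: (s3 ++ s4)))) = 0 :=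
    CCCCP_zero (fun s1 h1 s2 h2 s3 h3 s4 h4 => P_count_one C' (by
      simp [List.count_append, List.count_cons, nCx h1, nCy h2, nCz h3, nCt h4, hAB, hAC, hBC, Ne.symm hAB, Ne.symm hAC, Ne.symm hBC]))
  have kk41 : (C x fun s1 => C y fun s2 => C z fun s3 => C t fun s4 => P (s1 ++ A :: (s2 ++ A :: C' :: (s3 ++ B :: s4)))) = 0 :=
    CCCCP_zero (fun s1 h1 s2 h2 s3 h3 s4 h4 => P_count_one B (by
      simp [List.count_append, List.count_cons, nBx h1, nBy h2, nBz h3, nBt h4, hAB, hAC, hBC, Ne.symm hAB, Ne.symm hAC, Ne.symm hBC]))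
  have kk42 : (C x fun s1 => C y fun s2 => C z fun s3 => C t fun s4 => P (s1 ++ A :: (s2 ++ A :: C' :: (s3 ++ B :: C' :: s4)))) = 0 :=
    CCCCP_zero (fun s1 h1 s2 h2 s3 h3 s4 h4 => P_count_one B (by
      simp [List.count_append, List.count_cons, nBx h1, nBy h2, nBz h3, nBt h4, hAB, hAC, hBC, Ne.symm hAB, Ne.symm hAC, Ne.symm hBC]))
  have kk43 : (C x fun s1 => C y fun s2 => C z fun s3 => C t fun s4 => P (s1 ++ A :: B :: (s2 ++ (s3 ++ s4)))) = 0 :=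
    CCCCP_zero (fun s1 h1 s2 h2 s3 h3 s4 h4 => P_count_one A (by
      simp [List.count_append, List.count_cons, nAx h1, nAy h2, nAz h3, nAt h4, hAB, hAC, hBC, Ne.symm hAB, Ne.symm hAC, Ne.symm hBC]))
  have kk44 : (C x fun s1 => C y fun s2 => C z fun s3 => C t fun s4 => P (s1 ++ A :: B :: (s2 ++ (s3 ++ C' :: s4)))) = 0 :=
    CCCCP_zero (fun s1 h1 s2 h2 s3 h3 s4 h4 => P_count_one A (by
      simp [List.count_append, List.count_cons, nAx h1, nAy h2, nAz h3, nAt h4, hAB, hAC, hBC, Ne.symm hAB, Ne.symm hAC, Ne.symm hBC]))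
  have kk45 : (C x fun s1 => C y fun s2 => C z fun s3 => C t fun s4 => P (s1 ++ A :: B :: (s2 ++ (s3 ++ B :: s4)))) = 0 :=
    CCCCP_zero (fun s1 h1 s2 h2 s3 h3 s4 h4 => P_count_one A (by
      simp [List.count_append, List.count_cons, nAx h1, nAy h2, nAz h3, nAt h4, hAB, hAC, hBC, Ne.symm hAB, Ne.symm hAC, Ne.symm hBC]))
  have kk46 : (C x fun s1 => C y fun s2 => C z fun s3 => C t fun s4 => P (s1 ++ A :: B :: (s2 ++ (s3 ++ B :: C' :: s4)))) = 0 :=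
    CCCCP_zero (fun s1 h1 s2 h2 s3 h3 s4 h4 => P_count_one A (by
      simp [List.count_append, List.count_cons, nAx h1, nAy h2, nAz h3, nAt h4, hAB, hAC, hBC, Ne.symm hAB, Ne.symm hAC, Ne.symm hBC]))
  have kk47 : (C x fun s1 => C y fun s2 => C z fun s3 => C t fun s4 => P (s1 ++ A :: B :: (s2 ++ C' :: (s3 ++ s4)))) = 0 :=
    CCCCP_zero (fun s1 h1 s2 h2 s3 h3 s4 h4 => P_count_one A (by
      simp [List.count_append, List.count_cons, nAx h1, nAy h2, nAz h3, nAt h4, hAB, hAC, hBC, Ne.symm hAB, Ne.symm hAC, Ne.symm hBC]))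
  have kk48 : (C x fun s1 => C y fun s2 => C z fun s3 => C t fun s4 => P (s1 ++ A :: B :: (s2 ++ C' :: (s3 ++ C' :: s4)))) = 0 :=
    CCCCP_zero (fun s1 h1 s2 h2 s3 h3 s4 h4 => P_count_one A (by
      simp [List.count_append, List.count_cons, nAx h1, nAy h2, nAz h3, nAt h4, hAB, hAC, hBC, Ne.symm hAB, Ne.symm hAC, Ne.symm hBC]))
  have kk49 : (C x fun s1 => C y fun s2 => C z fun s3 => C t fun s4 => P (s1 ++ A :: B :: (s2 ++ C' :: (s3 ++ B :: s4)))) = 0 :=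
    CCCCP_zero (fun s1 h1 s2 h2 s3 h3 s4 h4 => P_count_one A (by
      simp [List.count_append, List.count_cons, nAx h1, nAy h2, nAz h3, nAt h4, hAB, hAC, hBC, Ne.symm hAB, Ne.symm hAC, Ne.symm hBC]))
  have kk50 : (C x fun s1 => C y fun s2 => C z fun s3 => C t fun s4 => P (s1 ++ A :: B :: (s2 ++ C' :: (s3 ++ B :: C' :: s4)))) = 0 :=
    CCCCP_zero (fun s1 h1 s2 h2 s3 h3 s4 h4 => P_count_one A (by
      simp [List.count_append, List.count_cons, nAx h1, nAy h2, nAz h3, nAt h4, hAB, hAC, hBC, Ne.symm hAB, Ne.symm hAC, Ne.symm hBC]))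
  have kk51 : (C x fun s1 => C y fun s2 => C z fun s3 => C t fun s4 => P (s1 ++ A :: B :: (s2 ++ A :: (s3 ++ s4)))) = 0 :=
    CCCCP_zero (fun s1 h1 s2 h2 s3 h3 s4 h4 => P_count_one B (by
      simp [List.count_append, List.count_cons, nBx h1, nBy h2, nBz h3, nBt h4, hAB, hAC, hBC, Ne.symm hAB, Ne.symm hAC, Ne.symm hBC]))
  have kk52 : (C x fun s1 => C y fun s2 => C z fun s3 => C t fun s4 => P (s1 ++ A :: B :: (s2 ++ A :: (s3 ++ C' :: s4)))) = 0 :=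
    CCCCP_zero (fun s1 h1 s2 h2 s3 h3 s4 h4 => P_count_one B (by
      simp [List.count_append, List.count_cons, nBx h1, nBy h2, nBz h3, nBt h4, hAB, hAC, hBC, Ne.symm hAB, Ne.symm hAC, Ne.symm hBC]))
  have kk53 : (C x fun s1 => C y fun s2 => C z fun s3 => C t fun s4 => P (s1 ++ A :: B :: (s2 ++ A :: (s3 ++ B :: C' :: s4)))) = 0 :=
    CCCCP_zero (fun s1 h1 s2 h2 s3 h3 s4 h4 => P_count_one C' (by
      simp [List.count_append, List.count_cons, nCx h1, nCy h2, nCz h3, nCt h4, hAB, hAC, hBC, Ne.symm hAB, Ne.symm hAC, Ne.symm hBC]))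
  have kk54 : (C x fun s1 => C y fun s2 => C z fun s3 => C t fun s4 => P (s1 ++ A :: B :: (s2 ++ A :: C' :: (s3 ++ s4)))) = 0 :=
    CCCCP_zero (fun s1 h1 s2 h2 s3 h3 s4 h4 => P_count_one B (by
      simp [List.count_append, List.count_cons, nBx h1, nBy h2, nBz h3, nBt h4, hAB, hAC, hBC, Ne.symm hAB, Ne.symm hAC, Ne.symm hBC]))
  have kk55 : (C x fun s1 => C y fun s2 => C z fun s3 => C t fun s4 => P (s1 ++ A :: B :: (s2 ++ A :: C' :: (s3 ++ C' :: s4)))) = 0 :=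
    CCCCP_zero (fun s1 h1 s2 h2 s3 h3 s4 h4 => P_count_one B (by
      simp [List.count_append, List.count_cons, nBx h1, nBy h2, nBz h3, nBt h4, hAB, hAC, hBC, Ne.symm hAB, Ne.symm hAC, Ne.symm hBC]))
  have kk56 : (C x fun s1 => C y fun s2 => C z fun s3 => C t fun s4 => P (s1 ++ A :: B :: (s2 ++ A :: C' :: (s3 ++ B :: s4)))) = 0 :=
    CCCCP_zero (fun s1 h1 s2 h2 s3 h3 s4 h4 => P_count_one C' (by
      simp [List.count_append, List.count_cons, nCx h1, nCy h2, nCz h3, nCt h4, hAB, hAC, hBC, Ne.symm hAB, Ne.symm hAC, Ne.symm hBC]))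
  have kk57 : (C x fun s1 => C y fun s2 => C z fun s3 => C t fun s4 => P (s1 ++ (s2 ++ (s3 ++ C' :: B :: s4)))) = 0 :=
    CCCCP_zero (fun s1 h1 s2 h2 s3 h3 s4 h4 => P_count_one B (by
      simp [List.count_append, List.count_cons, nBx h1, nBy h2, nBz h3, nBt h4, hAB, hAC, hBC, Ne.symm hAB, Ne.symm hAC, Ne.symm hBC]))
  have kk58 : (C x fun s1 => C y fun s2 => C z fun s3 => C t fun s4 => P (s1 ++ (s2 ++ A :: (s3 ++ C' :: B :: s4)))) = 0 :=
    CCCCP_zero (fun s1 h1 s2 h2 s3 h3 s4 h4 => P_count_one A (by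
      simp [List.count_append, List.count_cons, nAx h1, nAy h2, nAz h3, nAt h4, hAB, hAC, hBC, Ne.symm hAB, Ne.symm hAC, Ne.symm hBC]))
  have kk59 : (C x fun s1 => C y fun s2 => C z fun s3 => C t fun s4 => P (s1 ++ (s2 ++ C' :: (s3 ++ C' :: B :: s4)))) = 0 :=
    CCCCP_zero (fun s1 h1 s2 h2 s3 h3 s4 h4 => P_count_one B (by
      simp [List.count_append, List.count_cons, nBx h1, nBy h2, nBz h3, nBt h4, hAB, hAC, hBC, Ne.symm hAB, Ne.symm hAC, Ne.symm hBC]))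
  have kk60 : (C x fun s1 => C y fun s2 => C z fun s3 => C t fun s4 => P (s1 ++ (s2 ++ C' :: A :: (s3 ++ s4)))) = 0 :=
    CCCCP_zero (fun s1 h1 s2 h2 s3 h3 s4 h4 => P_count_one A (by
      simp [List.count_append, List.count_cons, nAx h1, nAy h2, nAz h3, nAt h4, hAB, hAC, hBC, Ne.symm hAB, Ne.symm hAC, Ne.symm hBC]))
  have kk61 : (C x fun s1 => C y fun s2 => C z fun s3 => C t fun s4 => P (s1 ++ (s2 ++ C' :: A :: (s3 ++ B :: s4)))) = 0 :=
    CCCCP_zero (fun s1 h1 s2 h2 s3 h3 s4 h4 => P_count_one A (by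
      simp [List.count_append, List.count_cons, nAx h1, nAy h2, nAz h3, nAt h4, hAB, hAC, hBC, Ne.symm hAB, Ne.symm hAC, Ne.symm hBC]))
  have kk62 : (C x fun s1 => C y fun s2 => C z fun s3 => C t fun s4 => P (s1 ++ (s2 ++ C' :: A :: (s3 ++ C' :: s4)))) = 0 :=
    CCCCP_zero (fun s1 h1 s2 h2 s3 h3 s4 h4 => P_count_one A (by
      simp [List.count_append, List.count_cons, nAx h1, nAy h2, nAz h3, nAt h4, hAB, hAC, hBC, Ne.symm hAB, Ne.symm hAC, Ne.symm hBC]))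
  have kk63 : (C x fun s1 => C y fun s2 => C z fun s3 => C t fun s4 => P (s1 ++ (s2 ++ C' :: A :: (s3 ++ C' :: B :: s4)))) = 0 :=
    CCCCP_zero (fun s1 h1 s2 h2 s3 h3 s4 h4 => P_count_one A (by
      simp [List.count_append, List.count_cons, nAx h1, nAy h2, nAz h3, nAt h4, hAB, hAC, hBC, Ne.symm hAB, Ne.symm hAC, Ne.symm hBC]))
  have kk64 : (C x fun s1 => C y fun s2 => C z fun s3 => C t fun s4 => P (s1 ++ A :: (s2 ++ (s3 ++ C' :: B :: s4)))) = 0 :=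
    CCCCP_zero (fun s1 h1 s2 h2 s3 h3 s4 h4 => P_count_one A (by
      simp [List.count_append, List.count_cons, nAx h1, nAy h2, nAz h3, nAt h4, hAB, hAC, hBC, Ne.symm hAB, Ne.symm hAC, Ne.symm hBC]))
  have kk65 : (C x fun s1 => C y fun s2 => C z fun s3 => C t fun s4 => P (s1 ++ A :: (s2 ++ A :: (s3 ++ C' :: B :: s4)))) = 0 :=
    CCCCP_zero (fun s1 h1 s2 h2 s3 h3 s4 h4 => P_count_one B (by
      simp [List.count_append, List.count_cons, nBx h1, nBy h2, nBz h3, nBt h4, hAB, hAC, hBC, Ne.symm hAB, Ne.symm hAC, Ne.symm hBC]))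
  have kk66 : (C x fun s1 => C y fun s2 => C z fun s3 => C t fun s4 => P (s1 ++ A :: (s2 ++ C' :: (s3 ++ C' :: B :: s4)))) = 0 :=
    CCCCP_zero (fun s1 h1 s2 h2 s3 h3 s4 h4 => P_count_one A (by
      simp [List.count_append, List.count_cons, nAx h1, nAy h2, nAz h3, nAt h4, hAB, hAC, hBC, Ne.symm hAB, Ne.symm hAC, Ne.symm hBC]))
  have kk67 : (C x fun s1 => C y fun s2 => C z fun s3 => C t fun s4 => P (s1 ++ A :: (s2 ++ C' :: A :: (s3 ++ s4)))) = 0 :=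
    CCCCP_zero (fun s1 h1 s2 h2 s3 h3 s4 h4 => P_count_one C' (by
      simp [List.count_append, List.count_cons, nCx h1, nCy h2, nCz h3, nCt h4, hAB, hAC, hBC, Ne.symm hAB, Ne.symm hAC, Ne.symm hBC]))
  have kk68 : (C x fun s1 => C y fun s2 => C z fun s3 => C t fun s4 => P (s1 ++ A :: (s2 ++ C' :: A :: (s3 ++ B :: s4)))) = 0 :=
    CCCCP_zero (fun s1 h1 s2 h2 s3 h3 s4 h4 => P_count_one B (by
      simp [List.count_append, List.count_cons, nBx h1, nBy h2, nBz h3, nBt h4, hAB, hAC, hBC, Ne.symm hAB, Ne.symm hAC, Ne.symm hBC]))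
  have kk69 : (C x fun s1 => C y fun s2 => C z fun s3 => C t fun s4 => P (s1 ++ A :: (s2 ++ C' :: A :: (s3 ++ C' :: B :: s4)))) = 0 :=
    CCCCP_zero (fun s1 h1 s2 h2 s3 h3 s4 h4 => P_count_one B (by
      simp [List.count_append, List.count_cons, nBx h1, nBy h2, nBz h3, nBt h4, hAB, hAC, hBC, Ne.symm hAB, Ne.symm hAC, Ne.symm hBC]))
  have kk70 : (C x fun s1 => C y fun s2 => C z fun s3 => C t fun s4 => P (s1 ++ B :: (s2 ++ (s3 ++ C' :: B :: s4)))) = 0 :=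
    CCCCP_zero (fun s1 h1 s2 h2 s3 h3 s4 h4 => P_count_one C' (by
      simp [List.count_append, List.count_cons, nCx h1, nCy h2, nCz h3, nCt h4, hAB, hAC, hBC, Ne.symm hAB, Ne.symm hAC, Ne.symm hBC]))
  have kk71 : (C x fun s1 => C y fun s2 => C z fun s3 => C t fun s4 => P (s1 ++ B :: (s2 ++ A :: (s3 ++ C' :: B :: s4)))) = 0 :=
    CCCCP_zero (fun s1 h1 s2 h2 s3 h3 s4 h4 => P_count_one A (by
      simp [List.count_append, List.count_cons, nAx h1, nAy h2, nAz h3, nAt h4, hAB, hAC, hBC, Ne.symm hAB, Ne.symm hAC, Ne.symm hBC]))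
  have kk72 : (C x fun s1 => C y fun s2 => C z fun s3 => C t fun s4 => P (s1 ++ B :: (s2 ++ C' :: A :: (s3 ++ s4)))) = 0 :=
    CCCCP_zero (fun s1 h1 s2 h2 s3 h3 s4 h4 => P_count_one A (by
      simp [List.count_append, List.count_cons, nAx h1, nAy h2, nAz h3, nAt h4, hAB, hAC, hBC, Ne.symm hAB, Ne.symm hAC, Ne.symm hBC]))
  have kk73 : (C x fun s1 => C y fun s2 => C z fun s3 => C t fun s4 => P (s1 ++ B :: (s2 ++ C' :: A :: (s3 ++ B :: s4)))) = 0 :=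
    CCCCP_zero (fun s1 h1 s2 h2 s3 h3 s4 h4 => P_count_one A (by
      simp [List.count_append, List.count_cons, nAx h1, nAy h2, nAz h3, nAt h4, hAB, hAC, hBC, Ne.symm hAB, Ne.symm hAC, Ne.symm hBC]))
  have kk74 : (C x fun s1 => C y fun s2 => C z fun s3 => C t fun s4 => P (s1 ++ B :: (s2 ++ C' :: A :: (s3 ++ C' :: s4)))) = 0 :=
    CCCCP_zero (fun s1 h1 s2 h2 s3 h3 s4 h4 => P_count_one A (by
      simp [List.count_append, List.count_cons, nAx h1, nAy h2, nAz h3, nAt h4, hAB, hAC, hBC, Ne.symm hAB, Ne.symm hAC, Ne.symm hBC]))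
  have kk75 : (C x fun s1 => C y fun s2 => C z fun s3 => C t fun s4 => P (s1 ++ B :: (s2 ++ C' :: A :: (s3 ++ C' :: B :: s4)))) = 0 :=
    CCCCP_zero (fun s1 h1 s2 h2 s3 h3 s4 h4 => P_count_one A (by
      simp [List.count_append, List.count_cons, nAx h1, nAy h2, nAz h3, nAt h4, hAB, hAC, hBC, Ne.symm hAB, Ne.symm hAC, Ne.symm hBC]))
  have kk76 : (C x fun s1 => C y fun s2 => C z fun s3 => C t fun s4 => P (s1 ++ B :: A :: (s2 ++ (s3 ++ s4)))) = 0 :=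
    CCCCP_zero (fun s1 h1 s2 h2 s3 h3 s4 h4 => P_count_one A (by
      simp [List.count_append, List.count_cons, nAx h1, nAy h2, nAz h3, nAt h4, hAB, hAC, hBC, Ne.symm hAB, Ne.symm hAC, Ne.symm hBC]))
  have kk77 : (C x fun s1 => C y fun s2 => C z fun s3 => C t fun s4 => P (s1 ++ B :: A :: (s2 ++ (s3 ++ B :: s4)))) = 0 :=
    CCCCP_zero (fun s1 h1 s2 h2 s3 h3 s4 h4 => P_count_one A (by
      simp [List.count_append, List.count_cons, nAx h1, nAy h2, nAz h3, nAt h4, hAB, hAC, hBC, Ne.symm hAB, Ne.symm hAC, Ne.symm hBC]))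
  have kk78 : (C x fun s1 => C y fun s2 => C z fun s3 => C t fun s4 => P (s1 ++ B :: A :: (s2 ++ (s3 ++ C' :: s4)))) = 0 :=
    CCCCP_zero (fun s1 h1 s2 h2 s3 h3 s4 h4 => P_count_one A (by
      simp [List.count_append, List.count_cons, nAx h1, nAy h2, nAz h3, nAt h4, hAB, hAC, hBC, Ne.symm hAB, Ne.symm hAC, Ne.symm hBC]))
  have kk79 : (C x fun s1 => C y fun s2 => C z fun s3 => C t fun s4 => P (s1 ++ B :: A :: (s2 ++ (s3 ++ C' :: B :: s4)))) = 0 :=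
    CCCCP_zero (fun s1 h1 s2 h2 s3 h3 s4 h4 => P_count_one A (by
      simp [List.count_append, List.count_cons, nAx h1, nAy h2, nAz h3, nAt h4, hAB, hAC, hBC, Ne.symm hAB, Ne.symm hAC, Ne.symm hBC]))
  have kk80 : (C x fun s1 => C y fun s2 => C z fun s3 => C t fun s4 => P (s1 ++ B :: A :: (s2 ++ A :: (s3 ++ s4)))) = 0 :=
    CCCCP_zero (fun s1 h1 s2 h2 s3 h3 s4 h4 => P_count_one B (by
      simp [List.count_append, List.count_cons, nBx h1, nBy h2, nBz h3, nBt h4, hAB, hAC, hBC, Ne.symm hAB, Ne.symm hAC, Ne.symm hBC]))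
  have kk81 : (C x fun s1 => C y fun s2 => C z fun s3 => C t fun s4 => P (s1 ++ B :: A :: (s2 ++ A :: (s3 ++ C' :: s4)))) = 0 :=
    CCCCP_zero (fun s1 h1 s2 h2 s3 h3 s4 h4 => P_count_one B (by
      simp [List.count_append, List.count_cons, nBx h1, nBy h2, nBz h3, nBt h4, hAB, hAC, hBC, Ne.symm hAB, Ne.symm hAC, Ne.symm hBC]))
  have kk82 : (C x fun s1 => C y fun s2 => C z fun s3 => C t fun s4 => P (s1 ++ B :: A :: (s2 ++ A :: (s3 ++ C' :: B :: s4)))) = 0 :=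
    CCCCP_zero (fun s1 h1 s2 h2 s3 h3 s4 h4 => P_count_one C' (by
      simp [List.count_append, List.count_cons, nCx h1, nCy h2, nCz h3, nCt h4, hAB, hAC, hBC, Ne.symm hAB, Ne.symm hAC, Ne.symm hBC]))
  have kk83 : (C x fun s1 => C y fun s2 => C z fun s3 => C t fun s4 => P (s1 ++ B :: A :: (s2 ++ C' :: (s3 ++ s4)))) = 0 :=
    CCCCP_zero (fun s1 h1 s2 h2 s3 h3 s4 h4 => P_count_one A (by
      simp [List.count_append, List.count_cons, nAx h1, nAy h2, nAz h3, nAt h4, hAB, hAC, hBC, Ne.symm hAB, Ne.symm hAC, Ne.symm hBC]))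
  have kk84 : (C x fun s1 => C y fun s2 => C z fun s3 => C t fun s4 => P (s1 ++ B :: A :: (s2 ++ C' :: (s3 ++ B :: s4)))) = 0 :=
    CCCCP_zero (fun s1 h1 s2 h2 s3 h3 s4 h4 => P_count_one A (by
      simp [List.count_append, List.count_cons, nAx h1, nAy h2, nAz h3, nAt h4, hAB, hAC, hBC, Ne.symm hAB, Ne.symm hAC, Ne.symm hBC]))
  have kk85 : (C x fun s1 => C y fun s2 => C z fun s3 => C t fun s4 => P (s1 ++ B :: A :: (s2 ++ C' :: (s3 ++ C' :: s4)))) = 0 :=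
    CCCCP_zero (fun s1 h1 s2 h2 s3 h3 s4 h4 => P_count_one A (by
      simp [List.count_append, List.count_cons, nAx h1, nAy h2, nAz h3, nAt h4, hAB, hAC, hBC, Ne.symm hAB, Ne.symm hAC, Ne.symm hBC]))
  have kk86 : (C x fun s1 => C y fun s2 => C z fun s3 => C t fun s4 => P (s1 ++ B :: A :: (s2 ++ C' :: (s3 ++ C' :: B :: s4)))) = 0 :=
    CCCCP_zero (fun s1 h1 s2 h2 s3 h3 s4 h4 => P_count_one A (by
      simp [List.count_append, List.count_cons, nAx h1, nAy h2, nAz h3, nAt h4, hAB, hAC, hBC, Ne.symm hAB, Ne.symm hAC, Ne.symm hBC]))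
  have kk87 : (C x fun s1 => C y fun s2 => C z fun s3 => C t fun s4 => P (s1 ++ B :: A :: (s2 ++ C' :: A :: (s3 ++ s4)))) = 0 :=
    CCCCP_zero (fun s1 h1 s2 h2 s3 h3 s4 h4 => P_count_one B (by
      simp [List.count_append, List.count_cons, nBx h1, nBy h2, nBz h3, nBt h4, hAB, hAC, hBC, Ne.symm hAB, Ne.symm hAC, Ne.symm hBC]))
  have kk88 : (C x fun s1 => C y fun s2 => C z fun s3 => C t fun s4 => P (s1 ++ B :: A :: (s2 ++ C' :: A :: (s3 ++ B :: s4)))) = 0 :=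
    CCCCP_zero (fun s1 h1 s2 h2 s3 h3 s4 h4 => P_count_one C' (by
      simp [List.count_append, List.count_cons, nCx h1, nCy h2, nCz h3, nCt h4, hAB, hAC, hBC, Ne.symm hAB, Ne.symm hAC, Ne.symm hBC]))
  have kk89 : (C x fun s1 => C y fun s2 => C z fun s3 => C t fun s4 => P (s1 ++ B :: A :: (s2 ++ C' :: A :: (s3 ++ C' :: s4)))) = 0 :=
    CCCCP_zero (fun s1 h1 s2 h2 s3 h3 s4 h4 => P_count_one B (by
      simp [List.count_append, List.count_cons, nBx h1, nBy h2, nBz h3, nBt h4, hAB, hAC, hBC, Ne.symm hAB, Ne.symm hAC, Ne.symm hBC]))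
  have hgrp : (C x fun s1 => C y fun s2 => C z fun s3 => C t fun s4 => P (s1 ++ A :: B :: (s2 ++ A :: (s3 ++ B :: s4)))) + (C x fun s1 => C y fun s2 => C z fun s3 => C t fun s4 => P (s1 ++ A :: (s2 ++ A :: C' :: (s3 ++ C' :: s4)))) + (C x fun s1 => C y fun s2 => C z fun s3 => C t fun s4 => P (s1 ++ B :: (s2 ++ C' :: (s3 ++ B :: C' :: s4)))) + (C x fun s1 => C y fun s2 => C z fun s3 => C t fun s4 => P (s1 ++ A :: B :: (s2 ++ A :: C' :: (s3 ++ B :: C' :: s4)))) = (C x fun s1 => C y fun s2 => C z fun s3 => C t fun s4 => P (s1 ++ B :: A :: (s2 ++ A :: (s3 ++ B :: s4)))) + (C x fun s1 => C y fun s2 => C z fun s3 => C t fun s4 => P (s1 ++ A :: (s2 ++ C' :: A :: (s3 ++ C' :: s4)))) + (C x fun s1 => C y fun s2 => C z fun s3 => C t fun s4 => P (s1 ++ B :: (s2 ++ C' :: (s3 ++ C' :: B :: s4)))) + (C x fun s1 => C y fun s2 => C z fun s3 => C t fun s4 => P (s1 ++ B :: A :: (s2 ++ C' :: A :: (s3 ++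 C' :: B :: s4)))) := by
    rw [← C_add, ← C_add, ← C_add]
    conv_rhs => rw [← C_add, ← C_add, ← C_add]
    apply C_congr; intro s1 h1
    rw [← C_add, ← C_add, ← C_add]
    conv_rhs => rw [← C_add, ← C_add, ← C_add]
    apply C_congr; intro s2 h2
    rw [← C_add, ← C_add, ← C_add]
    conv_rhs => rw [← C_add, ← C_add, ← C_add]
    apply C_congr; intro s3 h3
    rw [← C_add, ← C_add, ← C_add]
    conv_rhs => rw [← C_add, ← C_add, ← C_add]
    apply C_congr; intro s4 h4
    exact H3core hAB hAC hBC
      (not_mem_of_mem_sublists h1 hAx) (not_mem_of_mem_sublists h2 hAy)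
      (not_mem_of_mem_sublists h3 hAz) (not_mem_of_mem_sublists h4 hAt)
      (not_mem_of_mem_sublists h1 hBx) (not_mem_of_mem_sublists h2 hBy)
      (not_mem_of_mem_sublists h3 hBz) (not_mem_of_mem_sublists h4 hBt)
      (not_mem_of_mem_sublists h1 hCx) (not_mem_of_mem_sublists h2 hCy)
      (not_mem_of_mem_sublists h3 hCz) (not_mem_of_mem_sublists h4 hCt)
  rw [kk1, kk2, kk3, kk4, kk5, kk6, kk7, kk8, kk9, kk10, kk11, kk12, kk13, kk14, kk15, kk16, kk17, kk18, kk19, kk20, kk21, kk22, kk23, kk24, kk25, kk26, kk27, kk28, kk29, kk30, kk31, kk32, kk33, kk34, kk35, kk36, kk37, kk38, kk39, kk40, kk41, kk42, kk43, kk44, kk45, kk46, kk47, kk48, kk49, kk50, kk51, kk52, kk53, kk54, kk55, kk56, kk57, kk58, kk59, kk60, kk61, kk62, kk63, kk64, kk65, kk66, kk67, kk68, kk69, kk70, kk71, kk72, kk73, kk74, kk75, kk76, kk77, kk78, kk79, kk80, kk81, kk82, kk83, kk84, kk85, kk86, kk87, kk88, kk89]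
  revert hgrp
  generalize (C x fun s1 => C y fun s2 => C z fun s3 => C t fun s4 => P (s1 ++ (s2 ++ (s3 ++ s4)))) = vT0
  generalize (C x fun s1 => C y fun s2 => C z fun s3 => C t fun s4 => P (s1 ++ A :: (s2 ++ A :: (s3 ++ s4)))) = vTA
  generalize (C x fun s1 => C y fun s2 => C z fun s3 => C t fun s4 => P (s1 ++ B :: (s2 ++ (s3 ++ B :: s4)))) = vTB
  generalize (C x fun s1 => C y fun s2 => C z fun s3 => C t fun s4 => P (s1 ++ (s2 ++ C' :: (s3 ++ C' :: s4)))) = vTC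
  generalize (C x fun s1 => C y fun s2 => C z fun s3 => C t fun s4 => P (s1 ++ A :: B :: (s2 ++ A :: (s3 ++ B :: s4)))) = vLAB
  generalize (C x fun s1 => C y fun s2 => C z fun s3 => C t fun s4 => P (s1 ++ A :: (s2 ++ A :: C' :: (s3 ++ C' :: s4)))) = vLAC
  generalize (C x fun s1 => C y fun s2 => C z fun s3 => C t fun s4 => P (s1 ++ B :: (s2 ++ C' :: (s3 ++ B :: C' :: s4)))) = vLBC
  generalize (C x fun s1 => C y fun s2 => C z fun s3 => C t fun s4 => P (s1 ++ A :: B :: (s2 ++ A :: C' :: (s3 ++ B :: C' :: s4)))) = vLABC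
  generalize (C x fun s1 => C y fun s2 => C z fun s3 => C t fun s4 => P (s1 ++ B :: A :: (s2 ++ A :: (s3 ++ B :: s4)))) = vRAB
  generalize (C x fun s1 => C y fun s2 => C z fun s3 => C t fun s4 => P (s1 ++ A :: (s2 ++ C' :: A :: (s3 ++ C' :: s4)))) = vRAC
  generalize (C x fun s1 => C y fun s2 => C z fun s3 => C t fun s4 => P (s1 ++ B :: (s2 ++ C' :: (s3 ++ C' :: B :: s4)))) = vRBC
  generalize (C x fun s1 => C y fun s2 => C z fun s3 => C t fun s4 => P (s1 ++ B :: A :: (s2 ++ C' :: A :: (s3 ++ C' :: B :: s4)))) = vRABC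
  revert vT0 vTA vTB vTC vLAB vLAC vLBC vLABC vRAB vRAC vRBC vRABC
  decide

lemma CCP_zero {x y : List ℕ} {F : List ℕ → List ℕ → List ℕ}
    (h : ∀ s1 ∈ x.sublists, ∀ s2 ∈ y.sublists, P (F s1 s2) = 0) :
    C x (fun s1 => C y fun s2 => P (F s1 s2)) = 0 :=
  C_zero (fun s1 h1 => C_zero (fun s2 h2 => h s1 h1 s2 h2))

lemma GH1 (x y : List ℕ) (A : ℕ) (hA : A ∉ x ++ y) :
    G (x ++ [A, A] ++ y) = G (x ++ y) := by
  obtain ⟨hAx, hAy⟩ : A ∉ x ∧ A ∉ y := by simp at hA; tauto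
  have nAx := fun {s : List ℕ} (h : s ∈ x.sublists) =>
    List.count_eq_zero_of_not_mem (not_mem_of_mem_sublists h hAx)
  have nAy := fun {s : List ℕ} (h : s ∈ y.sublists) =>
    List.count_eq_zero_of_not_mem (not_mem_of_mem_sublists h hAy)
  unfold G
  simp only [List.append_assoc]
  simp only [C_append, C_cons, C_nil, C_add, List.cons_append, List.nil_append]
  have t2 : (C x fun s1 => C y fun s2 => P (s1 ++ A :: s2)) = 0 :=
    CCP_zero (fun s1 h1 s2 h2 => P_count_one A (by
      simp [List.count_append, List.count_cons, nAx h1, nAy h2]))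
  have t4 : (C x fun s1 => C y fun s2 => P (s1 ++ A :: A :: s2)) = 0 :=
    CCP_zero (fun s1 h1 s2 h2 => P_adj s1 s2 A)
  rw [t2, t4]
  generalize (C x fun s1 => C y fun s2 => P (s1 ++ s2)) = T
  revert T
  decide



lemma Giso {w₁ w₂ : List ℕ} (h : Isomorphic w₁ w₂) : G w₁ = G w₂ := by
  obtain ⟨f, hinj, rfl⟩ := h
  unfold G C
  rw [List.sublists_map, List.map_map]
  congr 1
  apply List.map_congr_left
  intro s hs
  simp only [Function.comp_apply]
  exact (P_relabel (fun b _ c _ he => hinj he)).symm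

lemma move_inv {w₁ w₂ : List ℕ} (h : Move w₁ w₂) : G w₁ = G w₂ := by
  cases h with
  | iso h => exact Giso h
  | h1 x y A hA => exact GH1 x y A hA
  | h2 x y z A B hAB hA hB => exact GH2 x y z A B hAB hA hB
  | h3 x y z t A B C hAB hAC hBC hA hB hC => exact GH3 x y z t A B C hAB hAC hBC hA hB hC

set_option maxRecDepth 100000 in
set_option maxHeartbeats 4000000 in
lemma Gne : G [0, 1, 0, 2, 3, 2, 1, 3] ≠ G [0, 1, 0, 2, 1, 3, 2, 3] := by decide

/-- ABACDCBD is not homotopic to ABACBDCD (A,B,C,D encoded as 0,1,2,3). -/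
theorem abacdcbd_not_homotopic_abacbdcd :
    ¬ Homotopic [0, 1, 0, 2, 3, 2, 1, 3] [0, 1, 0, 2, 1, 3, 2, 3] := by
  intro h
  have key : ∀ (a b : List ℕ), Relation.EqvGen Move a b → G a = G b := by
    intro a b hab
    induction hab with
    | rel _ _ hm => exact move_inv hm
    | refl => rfl
    | symm _ _ _ ih => exact ih.symm
    | trans _ _ _ _ _ ih1 ih2 => exact ih1.trans ih2
  exact Gne (key _ _ h)
end
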